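/- arXiv:0801.3331 — 6 statements merged into one kernel-verified Lean document; each statement's English description precedes it below -/
import Mathlib

section
/- Let ψ(x) = C·x with C = exp(−6). Then for all integers 1 ≤ i < j ≤ d one has (j−i+1)^{−(j−i)/2} · (1 − (f_{ψ,d}(j)/f_{ψ,d}(i))²)_+^{(j−i)/2} · ∏_{k=i}^{j} (f_{ψ,d}(i)/f_{ψ,d}(k)) ≤ (2πe(√e+1)²)^{−(j−i)/2}. -/
open scoped BigOperators

open scoped BigOperators

private lemma wcsi_logK_le :
    Real.log (2 * Real.pi * Real.exp 1 * (Real.sqrt (Real.exp 1) + 1) ^ 2) ≤ 5 := by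
  have hs : Real.sqrt (Real.exp 1) < 1.6488 := by
    rw [show (1.6488 : ℝ) = Real.sqrt (1.6488 ^ 2) by rw [Real.sqrt_sq]; norm_num]
    apply Real.sqrt_lt_sqrt (Real.exp_pos 1).le
    nlinarith [Real.exp_one_lt_d9]
  have h3 : (0:ℝ) ≤ Real.sqrt (Real.exp 1) := Real.sqrt_nonneg _
  have h4 : (Real.sqrt (Real.exp 1) + 1) ^ 2 < 7.02 := by nlinarith
  have h1 : Real.pi < 3.15 := Real.pi_lt_d2
  have h2 : Real.exp 1 < 2.7182818286 := Real.exp_one_lt_d9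
  have h6 : 2 * Real.pi * Real.exp 1 < 17.126 := by nlinarith [Real.pi_pos, Real.exp_pos 1]
  have hK : 2 * Real.pi * Real.exp 1 * (Real.sqrt (Real.exp 1) + 1) ^ 2 < 121 := by
    nlinarith [Real.pi_pos, Real.exp_pos 1, sq_nonneg (Real.sqrt (Real.exp 1) + 1)]
  have h5 : (121:ℝ) ≤ Real.exp 5 := by
    have : (2.7182818283:ℝ)^5 ≤ (Real.exp 1)^5 :=
      pow_le_pow_left₀ (by norm_num) Real.exp_one_gt_d9.le 5
    rw [show (5:ℝ) = (5:ℕ) * 1 by norm_num, Real.exp_nat_mul]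
    nlinarith
  have hpos : 0 < 2 * Real.pi * Real.exp 1 * (Real.sqrt (Real.exp 1) + 1) ^ 2 := by positivity
  calc Real.log _ ≤ Real.log (Real.exp 5) := Real.log_le_log hpos (by linarith)
    _ = 5 := Real.log_exp 5

private noncomputable def wcsiG (m : ℕ) : ℝ :=
  (m:ℝ) * Real.log m - ((m:ℝ) - 1) * Real.log ((m:ℝ) - 1)

private lemma wcsiG_step (m : ℕ) (hm : 2 ≤ m) : wcsiG (m+1) ≤ wcsiG m + 1 := by
  have ht : (2:ℝ) ≤ (m:ℝ) := by exact_mod_cast hm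
  set t : ℝ := (m:ℝ) with htdef
  have h0 : (0:ℝ) < t := by linarith
  have h1 : Real.log (t+1) ≤ Real.log t + 1/t := by
    have h := Real.log_le_sub_one_of_pos (show 0 < (t+1)/t by positivity)
    rw [Real.log_div (by linarith) (by linarith)] at h
    have he : (t+1)/t - 1 = 1/t := by field_simp; ring
    linarith [he ▸ h]
  have h2 : Real.log (t-1) ≤ Real.log t - 1/t := by
    have h := Real.log_le_sub_one_of_pos (show 0 < (t-1)/t by apply div_pos <;> linarith)
    rw [Real.log_div (by linarith) (by linarith)] at h
    have he : (t-1)/t - 1 = -(1/t) := by field_simp; ring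
    linarith [he ▸ h]
  have hcast : wcsiG (m+1) = (t+1) * Real.log (t+1) - t * Real.log t := by
    simp only [wcsiG]; push_cast; ring_nf; rfl
  have hcast2 : wcsiG m = t * Real.log t - (t-1) * Real.log (t-1) := rfl
  rw [hcast, hcast2]
  have ha : (t+1) * Real.log (t+1) ≤ (t+1) * (Real.log t + 1/t) :=
    mul_le_mul_of_nonneg_left h1 (by linarith)
  have hb : (t-1) * Real.log (t-1) ≤ (t-1) * (Real.log t - 1/t) :=
    mul_le_mul_of_nonneg_left h2 (by linarith)
  have h2t : 2/t ≤ 1 := by rw [div_le_one h0]; linarith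
  have hexp : (t+1) * (Real.log t + 1/t) + (t-1) * (Real.log t - 1/t)
      = 2 * (t * Real.log t) + 2/t := by field_simp; ring
  linarith

private lemma wcsiG_sum (x n : ℕ) (hx : 2 ≤ x) : wcsiG (x + n) ≤ wcsiG x + n := by
  induction n with
  | zero => simp
  | succ k ih =>
      have h := wcsiG_step (x + k) (le_trans hx (Nat.le_add_right _ _))
      push_cast
      push_cast at ih
      calc wcsiG (x + (k+1)) = wcsiG ((x + k) + 1) := by ring_nf
        _ ≤ wcsiG (x+k) + 1 := h
        _ ≤ wcsiG x + (↑k + 1) := by linarith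

private lemma wcsi_main_log (K : ℝ) (hK : Real.log K ≤ 5) (n x : ℕ) (hn : 1 ≤ n) (hx : 2 ≤ x)
    (r : ℝ) (hr0 : 0 < r) (hr1 : r < 1) :
    -((n:ℝ)/2) * Real.log ((n:ℝ)+1) + ((n:ℝ)/2) * Real.log (1 - r^2)
      + ((x:ℝ)-1) * Real.log r + (((x:ℝ)+(n:ℝ))/2) * (-6 + Real.log ((x:ℝ)+(n:ℝ)))
      - ((x:ℝ)/2) * (-6 + Real.log (x:ℝ))
    ≤ -((n:ℝ)/2) * Real.log K := by
  have hN : (1:ℝ) ≤ (n:ℝ) := by exact_mod_cast hn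
  have hX : (2:ℝ) ≤ (x:ℝ) := by exact_mod_cast hx
  set N := (n:ℝ)
  set X := (x:ℝ)
  have hr2 : 0 < 1 - r^2 := by nlinarith
  have hY1 : (0:ℝ) < X + N - 1 := by linarith
  have hX1 : (0:ℝ) < X - 1 := by linarith
  have hN0 : (0:ℝ) < N := by linarith
  have F1 : Real.log (1-r^2) + Real.log (X+N-1) - Real.log N ≤ (1-r^2)*(X+N-1)/N - 1 := by
    have h := Real.log_le_sub_one_of_pos (show 0 < (1-r^2)*(X+N-1)/N by positivity)
    rw [Real.log_div (by positivity) (by positivity),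
      Real.log_mul (by positivity) (by positivity)] at h
    linarith
  have F2 : 2 * Real.log r + Real.log (X+N-1) - Real.log (X-1)
      ≤ r^2*(X+N-1)/(X-1) - 1 := by
    have h := Real.log_le_sub_one_of_pos (show 0 < r^2*(X+N-1)/(X-1) by positivity)
    rw [Real.log_div (by positivity) (by positivity),
      Real.log_mul (by positivity) (by positivity), Real.log_pow] at h
    push_cast at h
    linarith
  have S1 := mul_le_mul_of_nonneg_left F1 (show (0:ℝ) ≤ N/2 by positivity)
  have S2 := mul_le_mul_of_nonneg_left F2 (show (0:ℝ) ≤ (X-1)/2 by positivity)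
  have E1 : N/2 * ((1-r^2)*(X+N-1)/N - 1) + (X-1)/2 * (r^2*(X+N-1)/(X-1) - 1) = 0 := by
    field_simp; ring
  have hG : (X+N) * Real.log (X+N) - (X+N-1) * Real.log (X+N-1)
      ≤ X * Real.log X - (X-1) * Real.log (X-1) + N := by
    have h := wcsiG_sum x n hx
    simp only [wcsiG] at h
    push_cast at h
    linarith
  have hlog : Real.log N ≤ Real.log (N+1) := Real.log_le_log hN0 (by linarith)
  have hmul : N * Real.log N ≤ N * Real.log (N+1) := mul_le_mul_of_nonneg_left hlog (by linarith)
  have hKm : N * Real.log K ≤ N * 5 := mul_le_mul_of_nonneg_left hK (by linarith)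
  nlinarith [S1, S2, E1, hG, hmul, hKm]

private lemma wcsi_main_mul (K : ℝ) (hK0 : 0 < K) (hK : Real.log K ≤ 5)
    (n x : ℕ) (hn : 1 ≤ n) (hx : 2 ≤ x) (r : ℝ) (hr : 0 < r) :
    ((n:ℝ)+1) ^ (-((n:ℝ)/2)) * (max (1 - r^2) 0) ^ ((n:ℝ)/2) *
      (r ^ (x-1) * (Real.exp (-6) * ((x:ℝ)+(n:ℝ))) ^ (((x:ℝ)+(n:ℝ))/2) /
        (Real.exp (-6) * (x:ℝ)) ^ ((x:ℝ)/2)) ≤ K ^ (-((n:ℝ)/2)) := by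
  have hN : (1:ℝ) ≤ (n:ℝ) := by exact_mod_cast hn
  have hX : (2:ℝ) ≤ (x:ℝ) := by exact_mod_cast hx
  have hRpos : (0:ℝ) < K ^ (-((n:ℝ)/2)) := Real.rpow_pos_of_pos hK0 _
  rcases le_or_gt 1 r with h1r | hr1
  · have hmax : max (1 - r^2) 0 = 0 := max_eq_right (by nlinarith)
    rw [hmax, Real.zero_rpow (by positivity), mul_zero, zero_mul]
    linarith
  · have hr2 : 0 < 1 - r^2 := by nlinarith
    have hmax : max (1 - r^2) 0 = 1 - r^2 := max_eq_left (by nlinarith)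
    rw [hmax]
    have hd1 : (0:ℝ) < Real.exp (-6) * ((x:ℝ)+(n:ℝ)) := by positivity
    have hd2 : (0:ℝ) < Real.exp (-6) * (x:ℝ) := by positivity
    have hL : (0:ℝ) < ((n:ℝ)+1) ^ (-((n:ℝ)/2)) * (1 - r^2) ^ ((n:ℝ)/2) *
        (r ^ (x-1) * (Real.exp (-6) * ((x:ℝ)+(n:ℝ))) ^ (((x:ℝ)+(n:ℝ))/2) /
          (Real.exp (-6) * (x:ℝ)) ^ ((x:ℝ)/2)) := by positivity
    rw [← Real.exp_log hL, ← Real.exp_log hRpos]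
    apply Real.exp_le_exp.mpr
    rw [Real.log_mul (by positivity) (by positivity), Real.log_mul (by positivity) (by positivity),
      Real.log_div (by positivity) (by positivity), Real.log_mul (by positivity) (by positivity),
      Real.log_rpow (by linarith : (0:ℝ) < (n:ℝ)+1), Real.log_rpow hr2,
      Real.log_rpow hd1, Real.log_rpow hd2, Real.log_rpow hK0, Real.log_pow,
      Real.log_mul (Real.exp_ne_zero _) (by positivity),
      Real.log_mul (Real.exp_ne_zero _) (by positivity), Real.log_exp]
    have hcast : ((x - 1 : ℕ) : ℝ) = (x:ℝ) - 1 := by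
      push_cast [Nat.cast_sub (by omega : 1 ≤ x)]; ring
    rw [hcast]
    have h := wcsi_main_log K hK n x hn hx r hr hr1
    linarith

private lemma wcsi_main_d (K : ℝ) (hK0 : 0 < K) (hK : Real.log K ≤ 5) (n : ℕ) (hn : 1 ≤ n)
    (z : ℝ) (hz0 : 0 ≤ z) (hz1 : z ≤ 1) :
    ((n:ℝ)+1) ^ (-((n:ℝ)/2)) * z ^ ((n:ℝ)/2) *
      (Real.exp (-6) * ((n:ℝ)+1)) ^ (((n:ℝ)+1)/2) ≤ K ^ (-((n:ℝ)/2)) := by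
  have hN : (1:ℝ) ≤ (n:ℝ) := by exact_mod_cast hn
  have hz : z ^ ((n:ℝ)/2) ≤ 1 := Real.rpow_le_one hz0 hz1 (by positivity)
  have hd1 : (0:ℝ) < Real.exp (-6) * ((n:ℝ)+1) := by positivity
  have hb1 : (0:ℝ) < ((n:ℝ)+1) ^ (-((n:ℝ)/2)) := Real.rpow_pos_of_pos (by linarith) _
  have hb4 : (0:ℝ) < (Real.exp (-6) * ((n:ℝ)+1)) ^ (((n:ℝ)+1)/2) := Real.rpow_pos_of_pos hd1 _
  have key : ((n:ℝ)+1) ^ (-((n:ℝ)/2)) * (Real.exp (-6) * ((n:ℝ)+1)) ^ (((n:ℝ)+1)/2)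
      ≤ K ^ (-((n:ℝ)/2)) := by
    have hRpos : (0:ℝ) < K ^ (-((n:ℝ)/2)) := Real.rpow_pos_of_pos hK0 _
    rw [← Real.exp_log (by positivity : (0:ℝ) < ((n:ℝ)+1) ^ (-((n:ℝ)/2)) *
      (Real.exp (-6) * ((n:ℝ)+1)) ^ (((n:ℝ)+1)/2)), ← Real.exp_log hRpos]
    apply Real.exp_le_exp.mpr
    rw [Real.log_mul (by positivity) (by positivity),
      Real.log_rpow (by linarith : (0:ℝ) < (n:ℝ)+1), Real.log_rpow hd1, Real.log_rpow hK0,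
      Real.log_mul (Real.exp_ne_zero _) (by positivity), Real.log_exp]
    have hlogn : Real.log ((n:ℝ)+1) ≤ (n:ℝ) := by
      have h := Real.log_le_sub_one_of_pos (show (0:ℝ) < (n:ℝ)+1 by linarith)
      linarith
    have hKm : (n:ℝ) * Real.log K ≤ (n:ℝ) * 5 := mul_le_mul_of_nonneg_left hK (by linarith)
    nlinarith
  calc ((n:ℝ)+1) ^ (-((n:ℝ)/2)) * z ^ ((n:ℝ)/2) * (Real.exp (-6) * ((n:ℝ)+1)) ^ (((n:ℝ)+1)/2)
      ≤ ((n:ℝ)+1) ^ (-((n:ℝ)/2)) * 1 * (Real.exp (-6) * ((n:ℝ)+1)) ^ (((n:ℝ)+1)/2) := by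
        exact mul_le_mul_of_nonneg_right (mul_le_mul_of_nonneg_left hz hb1.le) hb4.le
    _ = ((n:ℝ)+1) ^ (-((n:ℝ)/2)) * (Real.exp (-6) * ((n:ℝ)+1)) ^ (((n:ℝ)+1)/2) := by ring
    _ ≤ K ^ (-((n:ℝ)/2)) := key

/-- Theorem 2 of the paper. For `ψ(x) = C·x` with `C = exp (-6)` and
`f = f_{ψ,d}` (characterised by `f d = 1` and the recursion
`f(i)^{d-i} = ψ(d-i+1)^{(d-i+1)/2} ∏_{k=i+1}^d f(k)`), one has, for all `1 ≤ i < j ≤ d`,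
`(j-i+1)^{-(j-i)/2} (1-(f j/f i)²)₊^{(j-i)/2} ∏_{k=i}^j (f i/f k) ≤ (2πe(√e+1)²)^{-(j-i)/2}`. -/
theorem worst_case_shape_inequality
    (d : ℕ) (f : ℕ → ℝ)
    (hfpos : ∀ i, 1 ≤ i → i ≤ d → 0 < f i)
    (hfd : f d = 1)
    (hrec : ∀ i, 1 ≤ i → i < d →
      f i ^ (d - i) =
        (Real.exp (-6) * ((d : ℝ) - (i : ℝ) + 1)) ^ (((d : ℝ) - (i : ℝ) + 1) / 2) *
          ∏ k ∈ Finset.Icc (i + 1) d, f k)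
    (i j : ℕ) (hi : 1 ≤ i) (hij : i < j) (hjd : j ≤ d) :
    ((j : ℝ) - (i : ℝ) + 1) ^ (-(((j : ℝ) - (i : ℝ)) / 2)) *
        (max (1 - (f j / f i) ^ 2) 0) ^ (((j : ℝ) - (i : ℝ)) / 2) *
        ∏ k ∈ Finset.Icc i j, (f i / f k) ≤
      (2 * Real.pi * Real.exp 1 * (Real.sqrt (Real.exp 1) + 1) ^ 2)
        ^ (-(((j : ℝ) - (i : ℝ)) / 2)) := by
  have hid : i < d := lt_of_lt_of_le hij hjd
  have hfi : 0 < f i := hfpos i hi hid.le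
  have hfj : 0 < f j := hfpos j (by omega) hjd
  have hK0 : (0:ℝ) < 2 * Real.pi * Real.exp 1 * (Real.sqrt (Real.exp 1) + 1) ^ 2 := by
    positivity
  have hKlog := wcsi_logK_le
  set n : ℕ := j - i with hn_def
  have hn : 1 ≤ n := by omega
  have e3 : (j:ℝ) - (i:ℝ) = (n:ℝ) := by
    rw [hn_def]; push_cast [Nat.cast_sub hij.le]; ring
  have e4 : (j:ℝ) - (i:ℝ) + 1 = (n:ℝ) + 1 := by rw [e3]
  have hr : 0 < f j / f i := div_pos hfj hfi
  -- the product identity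
  have hIcc : ∀ m : ℕ, Finset.Icc (m+1) d = Finset.Ioc m d := by
    intro m; ext k; simp only [Finset.mem_Icc, Finset.mem_Ioc]; omega
  have hri := hrec i hi hid
  rw [hIcc] at hri
  have hPid : 0 < ∏ k ∈ Finset.Ioc i d, f k :=
    Finset.prod_pos fun k hk => hfpos k (by simp at hk; omega) (by simp at hk; omega)
  have hdi : (0:ℝ) < (d:ℝ) - (i:ℝ) + 1 := by
    have : (i:ℝ) ≤ (d:ℝ) := by exact_mod_cast hid.le
    linarith
  have hApos : 0 < (Real.exp (-6) * ((d:ℝ) - (i:ℝ) + 1)) ^ (((d:ℝ) - (i:ℝ) + 1)/2) :=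
    Real.rpow_pos_of_pos (mul_pos (Real.exp_pos _) hdi) _
  rcases eq_or_lt_of_le hjd with hjeq | hjlt
  · -- case j = d
    subst hjeq
    have hProd : ∏ k ∈ Finset.Icc i j, (f i / f k)
        = (Real.exp (-6) * ((j:ℝ) - (i:ℝ) + 1)) ^ (((j:ℝ) - (i:ℝ) + 1)/2) := by
      rw [Finset.Icc_eq_cons_Ioc hij.le, Finset.prod_cons, Finset.prod_div_distrib,
        Finset.prod_const, Nat.card_Ioc, div_self (ne_of_gt hfi), one_mul]
      rw [div_eq_iff (ne_of_gt hPid)]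
      rw [hri]
    rw [hProd, e4, e3]
    exact wcsi_main_d _ hK0 hKlog n hn _ (le_max_right _ _)
      (max_le (by nlinarith [sq_nonneg (f j / f i)]) zero_le_one)
  · -- case j < d
    set x : ℕ := d - j + 1 with hx_def
    have hx : 2 ≤ x := by omega
    have e1 : (d:ℝ) - (i:ℝ) + 1 = (x:ℝ) + (n:ℝ) := by
      rw [hx_def, hn_def]; push_cast [Nat.cast_sub hjd, Nat.cast_sub hij.le]; ring
    have e2 : (d:ℝ) - (j:ℝ) + 1 = (x:ℝ) := by
      rw [hx_def]; push_cast [Nat.cast_sub hjd]; ring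
    have e5 : d - j = x - 1 := by omega
    have hdj : (0:ℝ) < (d:ℝ) - (j:ℝ) + 1 := by
      have : (j:ℝ) ≤ (d:ℝ) := by exact_mod_cast hjd
      linarith
    have hBpos : 0 < (Real.exp (-6) * ((d:ℝ) - (j:ℝ) + 1)) ^ (((d:ℝ) - (j:ℝ) + 1)/2) :=
      Real.rpow_pos_of_pos (mul_pos (Real.exp_pos _) hdj) _
    have hrj := hrec j (by omega) hjlt
    rw [hIcc] at hrj
    have hPjd : 0 < ∏ k ∈ Finset.Ioc j d, f k :=
      Finset.prod_pos fun k hk => hfpos k (by simp at hk; omega) (by simp at hk; omega)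
    have hPij : 0 < ∏ k ∈ Finset.Ioc i j, f k :=
      Finset.prod_pos fun k hk => hfpos k (by simp at hk; omega) (by simp at hk; omega)
    have hsplit : (∏ k ∈ Finset.Ioc i j, f k) * ∏ k ∈ Finset.Ioc j d, f k
        = ∏ k ∈ Finset.Ioc i d, f k := Finset.prod_Ioc_consecutive f hij.le hjd
    have hkey : f i ^ (j - i) * f i ^ (d - j) = f i ^ (d - i) := by
      rw [← pow_add]; congr 1; omega
    have hProd : ∏ k ∈ Finset.Icc i j, (f i / f k) =
        (f j / f i) ^ (d - j) *
          ((Real.exp (-6) * ((d:ℝ) - (i:ℝ) + 1)) ^ (((d:ℝ) - (i:ℝ) + 1)/2) /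
           (Real.exp (-6) * ((d:ℝ) - (j:ℝ) + 1)) ^ (((d:ℝ) - (j:ℝ) + 1)/2)) := by
      rw [Finset.Icc_eq_cons_Ioc hij.le, Finset.prod_cons, Finset.prod_div_distrib,
        Finset.prod_const, Nat.card_Ioc, div_self (ne_of_gt hfi), one_mul, div_pow]
      have e6 : f i ^ (j - i) *
          (f i ^ (d - j) * (Real.exp (-6) * ((d:ℝ) - (j:ℝ) + 1)) ^ (((d:ℝ) - (j:ℝ) + 1)/2)) =
          f j ^ (d - j) * (Real.exp (-6) * ((d:ℝ) - (i:ℝ) + 1)) ^ (((d:ℝ) - (i:ℝ) + 1)/2) *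
            ∏ k ∈ Finset.Ioc i j, f k := by
        calc f i ^ (j - i) *
            (f i ^ (d - j) * (Real.exp (-6) * ((d:ℝ) - (j:ℝ) + 1)) ^ (((d:ℝ) - (j:ℝ) + 1)/2))
            = f i ^ (d - i) * (Real.exp (-6) * ((d:ℝ) - (j:ℝ) + 1)) ^ (((d:ℝ) - (j:ℝ) + 1)/2) := by
              rw [← hkey]; ring
          _ = ((Real.exp (-6) * ((d:ℝ) - (i:ℝ) + 1)) ^ (((d:ℝ) - (i:ℝ) + 1)/2) *
                ∏ k ∈ Finset.Ioc i d, f k) *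
                (Real.exp (-6) * ((d:ℝ) - (j:ℝ) + 1)) ^ (((d:ℝ) - (j:ℝ) + 1)/2) := by rw [hri]
          _ = ((Real.exp (-6) * ((d:ℝ) - (i:ℝ) + 1)) ^ (((d:ℝ) - (i:ℝ) + 1)/2) *
                ((∏ k ∈ Finset.Ioc i j, f k) * ∏ k ∈ Finset.Ioc j d, f k)) *
                (Real.exp (-6) * ((d:ℝ) - (j:ℝ) + 1)) ^ (((d:ℝ) - (j:ℝ) + 1)/2) := by
              rw [hsplit]
          _ = ((Real.exp (-6) * ((d:ℝ) - (j:ℝ) + 1)) ^ (((d:ℝ) - (j:ℝ) + 1)/2) *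
                ∏ k ∈ Finset.Ioc j d, f k) *
                (Real.exp (-6) * ((d:ℝ) - (i:ℝ) + 1)) ^ (((d:ℝ) - (i:ℝ) + 1)/2) *
                ∏ k ∈ Finset.Ioc i j, f k := by ring
          _ = f j ^ (d - j) * (Real.exp (-6) * ((d:ℝ) - (i:ℝ) + 1)) ^ (((d:ℝ) - (i:ℝ) + 1)/2) *
                ∏ k ∈ Finset.Ioc i j, f k := by rw [← hrj]
      rw [div_mul_div_comm, div_eq_div_iff (ne_of_gt hPij) (by positivity)]
      linear_combination e6
    rw [hProd, e3, e1, e2, e5, ← mul_div_assoc]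
    exact wcsi_main_mul _ hK0 hKlog n x hn hx _ hr
end

section
/- Let C = exp(−6) and for integers 1 ≤ i ≤ d define g_d(i) = √(d−i+1) · ∏_{l=i+1}^{d} (C(d−l+2))^{1/(2(d−l+1))}. Then there exists a constant K > 0 such that for all integers d ≥ 1 and all i ∈ {1,…,d}, one has |2·log g_d(i) − (1 + log C)·log(d−i+1) − (log²(d−i+1))/2| ≤ K. -/
open scoped BigOperators

noncomputable def Esum (m : ℕ) : ℝ :=
  (∑ k ∈ Finset.range m, 1/((k:ℝ)+1)) - Real.log ((m:ℝ)+1)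

noncomputable def Fsum (m : ℕ) : ℝ :=
  (∑ k ∈ Finset.range m, Real.log ((k:ℝ)+2)/((k:ℝ)+1)) - (Real.log ((m:ℝ)+1))^2/2

lemma log_gap {x : ℝ} (hx : 0 < x) :
    1/(x+1) ≤ Real.log (x+1) - Real.log x ∧ Real.log (x+1) - Real.log x ≤ 1/x := by
  have hx1 : (0:ℝ) < x + 1 := by linarith
  constructor
  · have h := Real.log_le_sub_one_of_pos (show (0:ℝ) < x/(x+1) by positivity)
    rw [Real.log_div hx.ne' hx1.ne'] at h
    have h2 : x/(x+1) - 1 = -(1/(x+1)) := by field_simp; ring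
    linarith
  · have h := Real.log_le_sub_one_of_pos (show (0:ℝ) < (x+1)/x by positivity)
    rw [Real.log_div hx1.ne' hx.ne'] at h
    have h2 : (x+1)/x - 1 = 1/x := by field_simp; ring
    linarith

lemma Esum_bounds (m : ℕ) : 0 ≤ Esum m ∧ Esum m ≤ 1 - 1/((m:ℝ)+1) := by
  induction m with
  | zero => simp [Esum]
  | succ m ih =>
    have hx : (0:ℝ) < (m:ℝ)+1 := by positivity
    obtain ⟨h1, h2⟩ := log_gap hx
    have e : (m:ℝ)+1+1 = (m:ℝ)+2 := by ring
    rw [e] at h1 h2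
    have hstep : Esum (m+1) = Esum m +
        (1/((m:ℝ)+1) - (Real.log ((m:ℝ)+2) - Real.log ((m:ℝ)+1))) := by
      simp only [Esum, Finset.sum_range_succ]
      push_cast
      rw [show ((m:ℝ)+1+1) = (m:ℝ)+2 from by ring]
      ring
    have hc : ((m+1:ℕ):ℝ) + 1 = (m:ℝ) + 2 := by push_cast; ring
    constructor
    · rw [hstep]; linarith [ih.1]
    · rw [hstep, hc]; linarith [ih.2]

lemma sqrt_facts (m : ℕ) :
    2/(((m:ℝ)+1) * Real.sqrt ((m:ℝ)+2)) ≤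
      6*(1/Real.sqrt ((m:ℝ)+1) - 1/Real.sqrt ((m:ℝ)+2)) := by
  set s := Real.sqrt ((m:ℝ)+1) with hs
  set t := Real.sqrt ((m:ℝ)+2) with ht
  have hs2 : s^2 = (m:ℝ)+1 := Real.sq_sqrt (by positivity)
  have ht2 : t^2 = (m:ℝ)+2 := Real.sq_sqrt (by positivity)
  have hs0 : 0 < s := Real.sqrt_pos.mpr (by positivity)
  have ht0 : 0 < t := Real.sqrt_pos.mpr (by positivity)
  have hs1 : 1 ≤ s := by nlinarith
  have hts : t ≤ 2*s := by nlinarith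
  have hst : s ≤ t := by nlinarith
  have key : 1 ≤ 3*s*(t-s) := by nlinarith
  have hsum : 6*(1/s - 1/t) = 6*(t-s)/(s*t) := by
    field_simp
  rw [hsum, ← hs2]
  rw [div_le_div_iff₀ (by positivity) (by positivity)]
  -- 2 * (s*t) ≤ 6*(t-s) * (s^2*t)
  nlinarith [mul_pos hs0 ht0, mul_pos (mul_pos hs0 hs0) ht0]

lemma frac_sq_le (x : ℝ) (hx : 0 ≤ x) :
    (1/(x+1))^2/2 ≤ 1/(x+1) - 1/(x+2) := by
  have h' : (1/(x+1))^2 ≤ 2/((x+1)*(x+2)) := by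
    rw [div_pow, one_pow, div_le_div_iff₀ (by positivity) (by positivity)]
    nlinarith
  have hfe : 1/(x+1) - 1/(x+2) = 1/((x+1)*(x+2)) := by
    field_simp
    ring
  have h2 : 2/((x+1)*(x+2)) = 2*(1/((x+1)*(x+2))) := by ring
  rw [hfe]
  linarith

lemma Fsum_bounds (m : ℕ) :
    0 ≤ Fsum m ∧ Fsum m ≤ 7 - 6/Real.sqrt ((m:ℝ)+1) - 1/((m:ℝ)+1) := by
  induction m with
  | zero => norm_num [Fsum]
  | succ m ih =>
    have hm1 : (0:ℝ) < (m:ℝ)+1 := by positivity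
    have hm2 : (0:ℝ) < (m:ℝ)+2 := by positivity
    set s := Real.sqrt ((m:ℝ)+1) with hsdef
    set t := Real.sqrt ((m:ℝ)+2) with htdef
    have hs2 : s^2 = (m:ℝ)+1 := Real.sq_sqrt (by positivity)
    have ht2 : t^2 = (m:ℝ)+2 := Real.sq_sqrt (by positivity)
    have hs0 : 0 < s := Real.sqrt_pos.mpr hm1
    have ht0 : 0 < t := Real.sqrt_pos.mpr hm2
    set b := Real.log ((m:ℝ)+1) with hbdef
    set c := Real.log ((m:ℝ)+2) with hcdef
    obtain ⟨h1, h2⟩ := log_gap hm1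
    have e : (m:ℝ)+1+1 = (m:ℝ)+2 := by ring
    rw [e] at h1 h2
    have hc0 : 0 ≤ c := Real.log_nonneg (by linarith)
    have hfe : 1/((m:ℝ)+1) - 1/((m:ℝ)+2) = 1/(((m:ℝ)+1)*((m:ℝ)+2)) := by
      field_simp
      ring
    have hstep : Fsum (m+1) = Fsum m + (c/((m:ℝ)+1) - (c^2 - b^2)/2) := by
      simp only [Fsum, Finset.sum_range_succ]
      push_cast
      rw [show ((m:ℝ)+1+1) = (m:ℝ)+2 from by ring]
      ring
    have hdel_eq : c/((m:ℝ)+1) - (c^2 - b^2)/2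
        = c*(1/((m:ℝ)+1) - (c - b)) + (c - b)^2/2 := by ring
    -- lower bound on increment
    have hlow : 0 ≤ c/((m:ℝ)+1) - (c^2 - b^2)/2 := by
      rw [hdel_eq]
      have := mul_nonneg hc0 (by linarith : (0:ℝ) ≤ 1/((m:ℝ)+1) - (c - b))
      nlinarith [sq_nonneg (c - b)]
    -- upper bound on increment
    have hup1 : c/((m:ℝ)+1) - (c^2 - b^2)/2
        ≤ c * (1/(((m:ℝ)+1)*((m:ℝ)+2))) + (1/((m:ℝ)+1))^2/2 := by
      rw [hdel_eq, ← hfe]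
      have hA := mul_le_mul_of_nonneg_left
        (by linarith : 1/((m:ℝ)+1) - (c - b) ≤ 1/((m:ℝ)+1) - 1/((m:ℝ)+2)) hc0
      have h1p : (0:ℝ) < 1/((m:ℝ)+2) := by positivity
      have ha2 : (c - b)^2 ≤ (1/((m:ℝ)+1))^2 := by nlinarith
      linarith
    have hc2t : c ≤ 2*t := by
      have hl : c = 2 * Real.log t := by
        rw [hcdef, ← ht2, Real.log_pow]
        push_cast; ring
      have := Real.log_le_sub_one_of_pos ht0
      linarith
    have hA2 : c * (1/(((m:ℝ)+1)*((m:ℝ)+2))) ≤ (2*t) * (1/(((m:ℝ)+1)*((m:ℝ)+2))) := by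
      have : (0:ℝ) ≤ 1/(((m:ℝ)+1)*((m:ℝ)+2)) := by positivity
      exact mul_le_mul_of_nonneg_right hc2t this
    have hA3 : (2*t) * (1/(((m:ℝ)+1)*((m:ℝ)+2))) = 2/(((m:ℝ)+1)*t) := by
      rw [← ht2]
      field_simp
    have hA4 := sqrt_facts m
    rw [← htdef, ← hsdef] at hA4
    have hB : (1/((m:ℝ)+1))^2/2 ≤ 1/((m:ℝ)+1) - 1/((m:ℝ)+2) :=
      frac_sq_le (m:ℝ) (Nat.cast_nonneg m)
    have hcc : ((m+1:ℕ):ℝ) + 1 = (m:ℝ)+2 := by push_cast; ring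
    constructor
    · rw [hstep]; linarith [ih.1]
    · rw [hstep, hcc]
      have hds : (6:ℝ)/s = 6*(1/s) := by ring
      have hdt : (6:ℝ)/t = 6*(1/t) := by ring
      have := ih.2
      linarith

/-- Corollary 1 of the paper, second part. With `C = exp (-6)` and
`g_d(i) = √(d-i+1) ∏_{l=i+1}^d (C(d-l+2))^{1/(2(d-l+1))}`, one has
`2 log g_d(i) = (1 + log C) log(d-i+1) + log²(d-i+1)/2 + O(1)` uniformly in `d` and `i`. -/
theorem log_worst_case_shape_estimate :
    ∃ K : ℝ, 0 < K ∧
      ∀ (d i : ℕ), 1 ≤ d → 1 ≤ i → i ≤ d →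
        |2 * Real.log (Real.sqrt ((d : ℝ) - (i : ℝ) + 1) *
              ∏ l ∈ Finset.Icc (i + 1) d,
                (Real.exp (-6) * ((d : ℝ) - (l : ℝ) + 2))
                  ^ (1 / (2 * ((d : ℝ) - (l : ℝ) + 1)))) -
            (1 + Real.log (Real.exp (-6))) * Real.log ((d : ℝ) - (i : ℝ) + 1) -
            (Real.log ((d : ℝ) - (i : ℝ) + 1)) ^ 2 / 2| ≤ K := by
  refine ⟨13, by norm_num, ?_⟩
  intro d i hd hi hid
  set m : ℕ := d - i with hm
  have hdm : (d:ℝ) - (i:ℝ) = (m:ℝ) := by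
    rw [hm, Nat.cast_sub hid]
  have hfac : ∀ l ∈ Finset.Icc (i+1) d, (0:ℝ) < Real.exp (-6) * ((d:ℝ) - (l:ℝ) + 2) := by
    intro l hl
    have h2 : l ≤ d := (Finset.mem_Icc.mp hl).2
    have h3 : (l:ℝ) ≤ (d:ℝ) := by exact_mod_cast h2
    have h4 : (0:ℝ) < (d:ℝ) - (l:ℝ) + 2 := by linarith
    positivity
  have hprodpos : (0:ℝ) < ∏ l ∈ Finset.Icc (i+1) d,
      (Real.exp (-6) * ((d:ℝ)-(l:ℝ)+2)) ^ (1/(2*((d:ℝ)-(l:ℝ)+1))) :=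
    Finset.prod_pos fun l hl => Real.rpow_pos_of_pos (hfac l hl) _
  have hm1pos : (0:ℝ) < (m:ℝ) + 1 := by positivity
  have hsq : (0:ℝ) < Real.sqrt ((d:ℝ) - (i:ℝ) + 1) := Real.sqrt_pos.mpr (by rw [hdm]; positivity)
  have hlogprod : Real.log (∏ l ∈ Finset.Icc (i+1) d,
        (Real.exp (-6) * ((d:ℝ)-(l:ℝ)+2)) ^ (1/(2*((d:ℝ)-(l:ℝ)+1))))
      = ∑ k ∈ Finset.range m, (1/(2*((k:ℝ)+1))) * Real.log (Real.exp (-6) * ((k:ℝ)+2)) := by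
    rw [Real.log_prod (fun l hl => (Real.rpow_pos_of_pos (hfac l hl) _).ne')]
    rw [Finset.sum_congr rfl (fun l hl => Real.log_rpow (hfac l hl) _)]
    refine Finset.sum_nbij' (i := fun l => d - l) (j := fun k => d - k) ?_ ?_ ?_ ?_ ?_
    · intro l hl
      simp only [Finset.mem_Icc] at hl
      simp only [Finset.mem_range]
      omega
    · intro k hk
      simp only [Finset.mem_range] at hk
      simp only [Finset.mem_Icc]
      omega
    · intro l hl
      simp only [Finset.mem_Icc] at hl
      omega
    · intro k hk
      simp only [Finset.mem_range] at hk
      omega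
    · intro l hl
      simp only [Finset.mem_Icc] at hl
      have hcast : ((d - l : ℕ) : ℝ) = (d:ℝ) - (l:ℝ) := by
        rw [Nat.cast_sub hl.2]
      rw [hcast]
  -- split logs of products inside the sum
  have hsplit : ∀ k : ℕ, Real.log (Real.exp (-6) * ((k:ℝ)+2)) = -6 + Real.log ((k:ℝ)+2) := by
    intro k
    rw [Real.log_mul (Real.exp_ne_zero _) (by positivity), Real.log_exp]
  have key : 2 * Real.log (Real.sqrt ((d : ℝ) - (i : ℝ) + 1) *
              ∏ l ∈ Finset.Icc (i + 1) d,
                (Real.exp (-6) * ((d : ℝ) - (l : ℝ) + 2))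
                  ^ (1 / (2 * ((d : ℝ) - (l : ℝ) + 1)))) -
            (1 + Real.log (Real.exp (-6))) * Real.log ((d : ℝ) - (i : ℝ) + 1) -
            (Real.log ((d : ℝ) - (i : ℝ) + 1)) ^ 2 / 2
      = -6 * Esum m + Fsum m := by
    rw [Real.log_mul hsq.ne' hprodpos.ne', hlogprod, hdm,
      Real.log_sqrt (by positivity), Real.log_exp]
    simp only [Esum, Fsum]
    have hsum : ∀ k ∈ Finset.range m,
        (1/(2*((k:ℝ)+1))) * Real.log (Real.exp (-6) * ((k:ℝ)+2))
        = (-3) * (1/((k:ℝ)+1)) + (Real.log ((k:ℝ)+2)/((k:ℝ)+1))/2 := by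
      intro k _
      rw [hsplit k]
      have hk : ((k:ℝ)+1) ≠ 0 := by positivity
      field_simp
      ring
    rw [Finset.sum_congr rfl hsum, Finset.sum_add_distrib, ← Finset.mul_sum,
      ← Finset.sum_div]
    ring
  rw [key]
  obtain ⟨he1, he2⟩ := Esum_bounds m
  obtain ⟨hf1, hf2⟩ := Fsum_bounds m
  have h1 : (0:ℝ) ≤ 1/((m:ℝ)+1) := by positivity
  have h2 : (0:ℝ) ≤ 6/Real.sqrt ((m:ℝ)+1) := by positivity
  rw [abs_le]
  constructor <;> linarith
end

section
/- Let (b_1,…,b_d) be linearly independent vectors of ℝ^n and let i ∈ {1,…,d}. Then the number of integer vectors (y_i,…,y_d) ∈ (ℤ∖{0})^{d−i+1} satisfying Σ_{j=i}^{d} y_j²‖b_j*‖² ≤ (4/5)‖b_1‖² is at most the number of integer vectors (z_i,…,z_d) ∈ ℤ^{d−i+1} satisfying ‖Σ_{j=i}^{d} z_j b_j(i)‖ ≤ ‖b_1‖. -/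
open scoped BigOperators

/-- Gram–Schmidt orthogonalisation `bᵢ*` of a finite family of vectors. -/
noncomputable def gso {n d : ℕ} (b : Fin d → EuclideanSpace ℝ (Fin n)) (i : Fin d) :
    EuclideanSpace ℝ (Fin n) :=
  @InnerProductSpace.gramSchmidt ℝ (EuclideanSpace ℝ (Fin n)) _ _ _ (Fin d) _ _ (Finite.to_wellFoundedLT) b i

/-- `gsProj b i j` is `b_j(i)`: the orthogonal projection of `b j` onto the orthogonal
complement of the span of `b k`, `k < i`. -/
noncomputable def gsProj {n d : ℕ} (b : Fin d → EuclideanSpace ℝ (Fin n)) (i j : Fin d) :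
    EuclideanSpace ℝ (Fin n) :=
  (Submodule.orthogonalProjectionOnto (Submodule.span ℝ (b '' {k | k < i}))ᗮ (b j) : EuclideanSpace ℝ (Fin n))

/-- A family is HKZ-reduced when, for every `i`, `‖bᵢ*‖` is the minimum of the lattice
generated by `b_i(i), …, b_d(i)`,  i.e. every nonzero integer combination of the projected
vectors is at least as long as `bᵢ*`. -/
def IsHKZReduced {n d : ℕ} (b : Fin d → EuclideanSpace ℝ (Fin n)) : Prop :=
  ∀ i : Fin d, ∀ x : Fin d → ℤ,
    (∑ j ∈ Finset.Ici i, (x j : ℝ) • gsProj b i j) ≠ 0 →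
    ‖gso b i‖ ≤ ‖∑ j ∈ Finset.Ici i, (x j : ℝ) • gsProj b i j‖

/-- A family is `k`-BKZ-reduced when every block `(b_i(i), …, b_{i+k-1}(i))` is HKZ-reduced. -/
def IsBKZReduced {n d : ℕ} (k : ℕ) (b : Fin d → EuclideanSpace ℝ (Fin n)) : Prop :=
  ∀ i : Fin d, ∀ h : (i : ℕ) + k ≤ d,
    IsHKZReduced (fun t : Fin k => gsProj b i ⟨(i : ℕ) + (t : ℕ), by have := t.isLt; omega⟩)

/-- The minimum of the lattice generated by the family `b`. -/
noncomputable def latticeMin {n d : ℕ} (b : Fin d → EuclideanSpace ℝ (Fin n)) : ℝ :=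
  sInf {r | ∃ x : Fin d → ℤ, (∑ i, (x i : ℝ) • b i) ≠ 0 ∧ r = ‖∑ i, (x i : ℝ) • b i‖}

namespace KannanAux

variable {n d : ℕ}

lemma gso_def (b : Fin d → EuclideanSpace ℝ (Fin n)) :
    gso b = @InnerProductSpace.gramSchmidt ℝ (EuclideanSpace ℝ (Fin n)) _ _ _ (Fin d) _ _
      (Finite.to_wellFoundedLT) b := rfl

/-- Gram–Schmidt coefficients. -/
noncomputable def mu (b : Fin d → EuclideanSpace ℝ (Fin n)) (j k : Fin d) : ℝ :=
  (inner ℝ (gso b k) (b j) : ℝ) / ‖gso b k‖ ^ 2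

/-- `mu` together with the unit diagonal. -/
noncomputable def mu' (b : Fin d → EuclideanSpace ℝ (Fin n)) (j k : Fin d) : ℝ :=
  if j = k then 1 else mu b j k

lemma b_decomp (b : Fin d → EuclideanSpace ℝ (Fin n)) (j : Fin d) :
    b j = gso b j + ∑ k ∈ Finset.Iio j, mu b j k • gso b k := by
  have h := @InnerProductSpace.gramSchmidt_def'' ℝ (EuclideanSpace ℝ (Fin n)) _ _ _ (Fin d) _ _
      (Finite.to_wellFoundedLT) b j
  rw [← gso_def] at h
  simpa [mu] using h

lemma gso_orth (b : Fin d → EuclideanSpace ℝ (Fin n)) {j k : Fin d} (h : j ≠ k) :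
    (inner ℝ (gso b j) (gso b k) : ℝ) = 0 := by
  have h2 := @InnerProductSpace.gramSchmidt_orthogonal ℝ (EuclideanSpace ℝ (Fin n)) _ _ _ (Fin d) _ _
      (Finite.to_wellFoundedLT) b j k h
  rwa [← gso_def] at h2

lemma gso_ne_zero {b : Fin d → EuclideanSpace ℝ (Fin n)} (hb : LinearIndependent ℝ b)
    (j : Fin d) : gso b j ≠ 0 := by
  have h2 := @InnerProductSpace.gramSchmidt_ne_zero ℝ (EuclideanSpace ℝ (Fin n)) _ _ _ (Fin d) _ _
      (Finite.to_wellFoundedLT) b j hb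
  rwa [← gso_def] at h2

/-- The projection map onto the orthogonal complement, as a map to the ambient space. -/
noncomputable def Pmap (b : Fin d → EuclideanSpace ℝ (Fin n)) (i : Fin d) :
    EuclideanSpace ℝ (Fin n) →L[ℝ] EuclideanSpace ℝ (Fin n) :=
  (Submodule.span ℝ (b '' {k | k < i}))ᗮ.subtypeL.comp
    (Submodule.orthogonalProjectionOnto (Submodule.span ℝ (b '' {k | k < i}))ᗮ)

lemma gsProj_eq_Pmap (b : Fin d → EuclideanSpace ℝ (Fin n)) (i j : Fin d) :
    gsProj b i j = Pmap b i (b j) := rfl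

lemma Pmap_gso_of_lt (b : Fin d → EuclideanSpace ℝ (Fin n)) {i k : Fin d} (hk : k < i) :
    Pmap b i (gso b k) = 0 := by
  have hmem : gso b k ∈ Submodule.span ℝ (b '' {t | t < i}) := by
    have h1 : gso b k ∈ Submodule.span ℝ (b '' Set.Iic k) := by
      rw [gso_def]
      exact @InnerProductSpace.gramSchmidt_mem_span ℝ (EuclideanSpace ℝ (Fin n)) _ _ _ (Fin d) _ _
        (Finite.to_wellFoundedLT) b k k le_rfl
    refine Submodule.span_mono (Set.image_mono ?_) h1
    intro t ht
    exact lt_of_le_of_lt ht hk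
  have hmem2 : gso b k ∈ ((Submodule.span ℝ (b '' {t | t < i}))ᗮ)ᗮ := by
    rw [Submodule.orthogonal_orthogonal]
    exact hmem
  have h0 := Submodule.orthogonalProjectionOnto_apply_of_mem_orthogonal hmem2
  simp [Pmap, h0]

lemma gso_mem_orthogonal (b : Fin d → EuclideanSpace ℝ (Fin n)) {i k : Fin d} (hk : i ≤ k) :
    gso b k ∈ (Submodule.span ℝ (b '' {t | t < i}))ᗮ := by
  have hspan : Submodule.span ℝ (b '' {t | t < i})
      = Submodule.span ℝ (gso b '' Set.Iio i) := by
    rw [gso_def]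
    rw [@InnerProductSpace.span_gramSchmidt_Iio ℝ (EuclideanSpace ℝ (Fin n)) _ _ _ (Fin d) _ _
      (Finite.to_wellFoundedLT) b i]
    rfl
  rw [hspan, Submodule.mem_orthogonal]
  intro u hu
  induction hu using Submodule.span_induction with
  | mem x hx =>
      obtain ⟨t, ht, rfl⟩ := hx
      have hne : t ≠ k := fun h => absurd hk (not_le.mpr (h ▸ ht))
      exact gso_orth b hne
  | zero => simp
  | add x y _ _ hx hy => rw [inner_add_left, hx, hy, add_zero]
  | smul c x _ hx => rw [inner_smul_left, hx, mul_zero]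

lemma Pmap_gso_of_le (b : Fin d → EuclideanSpace ℝ (Fin n)) {i k : Fin d} (hk : i ≤ k) :
    Pmap b i (gso b k) = gso b k := by
  have := Submodule.starProjection_eq_self_iff.mpr (gso_mem_orthogonal b hk)
  exact this

lemma gsProj_eq (b : Fin d → EuclideanSpace ℝ (Fin n)) {i j : Fin d} (hj : i ≤ j) :
    gsProj b i j = ∑ k ∈ Finset.Icc i j, mu' b j k • gso b k := by
  rw [gsProj_eq_Pmap]
  conv_lhs => rw [b_decomp b j]
  rw [map_add, map_sum]
  have h1 : Pmap b i (gso b j) = gso b j := Pmap_gso_of_le b hj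
  have h2 : ∑ k ∈ Finset.Iio j, Pmap b i (mu b j k • gso b k)
      = ∑ k ∈ Finset.Ico i j, mu b j k • gso b k := by
    rw [← Finset.sum_subset (Finset.Ico_subset_Iio_self : Finset.Ico i j ⊆ Finset.Iio j)]
    · refine Finset.sum_congr rfl fun k hk => ?_
      rw [map_smul, Pmap_gso_of_le b (Finset.mem_Ico.mp hk).1]
    · intro k hk hk2
      have hki : k < i := by
        rcases lt_or_ge k i with h | h
        · exact h
        · exact absurd (Finset.mem_Ico.mpr ⟨h, Finset.mem_Iio.mp hk⟩) hk2
      rw [map_smul, Pmap_gso_of_lt b hki, smul_zero]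
  rw [h1, h2]
  have h3 : Finset.Icc i j = insert j (Finset.Ico i j) := (Finset.Ico_insert_right hj).symm
  rw [h3, Finset.sum_insert Finset.right_notMem_Ico]
  have h4 : mu' b j j = 1 := by simp [mu']
  rw [h4, one_smul]
  congr 1
  refine Finset.sum_congr rfl fun k hk => ?_
  have : j ≠ k := fun h => absurd (Finset.mem_Ico.mp hk).2 (by simp [h])
  rw [mu', if_neg this]

/-- The unipotent change of coordinates. -/
noncomputable def coef (b : Fin d → EuclideanSpace ℝ (Fin n)) (a : Fin d → ℝ) (k : Fin d) : ℝ :=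
  ∑ j ∈ Finset.Ici k, a j * mu' b j k

lemma sum_gsProj (b : Fin d → EuclideanSpace ℝ (Fin n)) (i : Fin d) (a : Fin d → ℝ) :
    ∑ j ∈ Finset.Ici i, a j • gsProj b i j = ∑ k ∈ Finset.Ici i, coef b a k • gso b k := by
  have h1 : ∑ j ∈ Finset.Ici i, a j • gsProj b i j
      = ∑ j ∈ Finset.Ici i, ∑ k ∈ Finset.Icc i j, (a j * mu' b j k) • gso b k := by
    refine Finset.sum_congr rfl fun j hj => ?_
    rw [gsProj_eq b (Finset.mem_Ici.mp hj), Finset.smul_sum]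
    refine Finset.sum_congr rfl fun k _ => ?_
    rw [smul_smul]
  rw [h1]
  rw [Finset.sum_comm' (fun j k =>
    (show j ∈ Finset.Ici i ∧ k ∈ Finset.Icc i j ↔ j ∈ Finset.Ici k ∧ k ∈ Finset.Ici i by
      simp only [Finset.mem_Ici, Finset.mem_Icc]
      constructor
      · rintro ⟨h1, h2, h3⟩; exact ⟨h3, h2⟩
      · rintro ⟨h1, h2⟩; exact ⟨le_trans h2 h1, h2, h1⟩))]
  refine Finset.sum_congr rfl fun k _ => ?_
  rw [coef, Finset.sum_smul]

lemma norm_sum_gso_sq (b : Fin d → EuclideanSpace ℝ (Fin n)) (s : Finset (Fin d))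
    (c : Fin d → ℝ) :
    ‖∑ k ∈ s, c k • gso b k‖ ^ 2 = ∑ k ∈ s, c k ^ 2 * ‖gso b k‖ ^ 2 := by
  rw [← real_inner_self_eq_norm_sq, sum_inner]
  refine Finset.sum_congr rfl fun k hk => ?_
  rw [inner_sum, Finset.sum_eq_single k]
  · rw [real_inner_smul_left, real_inner_smul_right, real_inner_self_eq_norm_sq]; ring
  · intro l hl hlk
    rw [real_inner_smul_left, real_inner_smul_right, gso_orth b (Ne.symm hlk)]
    ring
  · intro h; exact absurd hk h

/-- The integer vector `z` built from `y` by the rounding procedure, descending recursion. -/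
noncomputable def buildZ (μ : Fin d → Fin d → ℝ) (y : Fin d → ℤ) : Fin d → ℤ :=
  WellFounded.fix (wellFounded_gt (α := Fin d)) fun k ih =>
    if 0 < y k then
      ⌊(y k : ℝ) - ∑ j ∈ (Finset.Ioi k).attach, (ih j (Finset.mem_Ioi.mp j.2) : ℝ) * μ j k⌋
    else
      ⌈(y k : ℝ) - ∑ j ∈ (Finset.Ioi k).attach, (ih j (Finset.mem_Ioi.mp j.2) : ℝ) * μ j k⌉

/-- The correction term. -/
noncomputable def theta (μ : Fin d → Fin d → ℝ) (y : Fin d → ℤ) (k : Fin d) : ℝ :=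
  ∑ j ∈ Finset.Ioi k, (buildZ μ y j : ℝ) * μ j k

lemma buildZ_eq (μ : Fin d → Fin d → ℝ) (y : Fin d → ℤ) (k : Fin d) :
    buildZ μ y k = if 0 < y k then ⌊(y k : ℝ) - theta μ y k⌋ else ⌈(y k : ℝ) - theta μ y k⌉ := by
  rw [buildZ, WellFounded.fix_eq]
  have : ∑ j ∈ (Finset.Ioi k).attach,
      ((WellFounded.fix (wellFounded_gt (α := Fin d)) (fun k ih =>
        if 0 < y k then
          ⌊(y k : ℝ) - ∑ j ∈ (Finset.Ioi k).attach, (ih j (Finset.mem_Ioi.mp j.2) : ℝ) * μ j k⌋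
        else
          ⌈(y k : ℝ) - ∑ j ∈ (Finset.Ioi k).attach, (ih j (Finset.mem_Ioi.mp j.2) : ℝ) * μ j k⌉)
        (j : Fin d) : ℝ)) * μ j k = theta μ y k := by
    rw [theta]
    rw [← Finset.sum_attach (Finset.Ioi k) (fun j => (buildZ μ y j : ℝ) * μ j k)]
    rfl
  rw [this]

/-- The resulting real coefficient. -/
noncomputable def czOf (μ : Fin d → Fin d → ℝ) (z : Fin d → ℤ) (k : Fin d) : ℝ :=
  (z k : ℝ) + ∑ j ∈ Finset.Ioi k, (z j : ℝ) * μ j k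

lemma cz_buildZ (μ : Fin d → Fin d → ℝ) (y : Fin d → ℤ) (k : Fin d) :
    czOf μ (buildZ μ y) k = (buildZ μ y k : ℝ) + theta μ y k := rfl

lemma cz_mem (μ : Fin d → Fin d → ℝ) (y : Fin d → ℤ) (k : Fin d) (hy : y k ≠ 0) :
    |czOf μ (buildZ μ y) k| ≤ |(y k : ℝ)| ∧
      (if 0 < czOf μ (buildZ μ y) k then ⌈czOf μ (buildZ μ y) k⌉
        else ⌊czOf μ (buildZ μ y) k⌋) = y k := by
  set θ := theta μ y k with hθ
  set c := czOf μ (buildZ μ y) k with hc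
  by_cases hpos : 0 < y k
  · have h1 : (1 : ℝ) ≤ (y k : ℝ) := by exact_mod_cast hpos
    have hz : buildZ μ y k = ⌊(y k : ℝ) - θ⌋ := by rw [buildZ_eq, if_pos hpos]
    have hcval : c = (⌊(y k : ℝ) - θ⌋ : ℝ) + θ := by rw [hc, cz_buildZ, hz]
    have hub : c ≤ (y k : ℝ) := by
      rw [hcval]
      have := Int.floor_le ((y k : ℝ) - θ)
      linarith
    have hlb : (y k : ℝ) - 1 < c := by
      rw [hcval]
      have := Int.sub_one_lt_floor ((y k : ℝ) - θ)
      linarith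
    have hcpos : 0 < c := by linarith
    constructor
    · rw [abs_of_pos hcpos, abs_of_pos (by linarith : (0:ℝ) < (y k : ℝ))]
      exact hub
    · rw [if_pos hcpos]
      exact Int.ceil_eq_iff.mpr ⟨hlb, hub⟩
  · have hneg : y k < 0 := lt_of_le_of_ne (not_lt.mp hpos) hy
    have h1 : (y k : ℝ) ≤ -1 := by
      have : y k ≤ -1 := by omega
      exact_mod_cast this
    have hz : buildZ μ y k = ⌈(y k : ℝ) - θ⌉ := by rw [buildZ_eq, if_neg hpos]
    have hcval : c = (⌈(y k : ℝ) - θ⌉ : ℝ) + θ := by rw [hc, cz_buildZ, hz]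
    have hlb : (y k : ℝ) ≤ c := by
      rw [hcval]
      have := Int.le_ceil ((y k : ℝ) - θ)
      linarith
    have hub : c < (y k : ℝ) + 1 := by
      rw [hcval]
      have := Int.ceil_lt_add_one ((y k : ℝ) - θ)
      linarith
    have hcneg : ¬(0 < c) := by push_neg; linarith
    constructor
    · rw [abs_of_nonpos (by linarith : c ≤ 0), abs_of_neg (by linarith : (y k : ℝ) < 0)]
      linarith
    · rw [if_neg hcneg]
      exact Int.floor_eq_iff.mpr ⟨hlb, hub⟩

end KannanAux

open KannanAux in
/-- Lemma 2 of the paper. The number of integer vectors with all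
coordinates nonzero in the shrunk ellipsoid is at most the number of integer points in the
enumeration ellipsoid of Kannan's algorithm. -/
theorem kannan_enumeration_lower_bound_aux
    (n d : ℕ) (b : Fin d → EuclideanSpace ℝ (Fin n)) (hb : LinearIndependent ℝ b)
    (i : Fin d) :
    ({y : {j : Fin d // i ≤ j} → ℤ |
        (∀ j, y j ≠ 0) ∧
        ∑ j, (y j : ℝ) ^ 2 * ‖gso b j.1‖ ^ 2 ≤ 4 / 5 * ‖b ⟨0, i.pos⟩‖ ^ 2}).ncard ≤
    ({z : {j : Fin d // i ≤ j} → ℤ |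
        ‖∑ j, (z j : ℝ) • gsProj b i j.1‖ ≤ ‖b ⟨0, i.pos⟩‖}).ncard := by
  classical
  set B : ℝ := ‖b ⟨0, i.pos⟩‖ with hB
  have hB0 : 0 ≤ B := norm_nonneg _
  set S := {j : Fin d // i ≤ j}
  set A : Set (S → ℤ) := {y | (∀ j, y j ≠ 0) ∧
      ∑ j, (y j : ℝ) ^ 2 * ‖gso b j.1‖ ^ 2 ≤ 4 / 5 * B ^ 2} with hA
  set Z : Set (S → ℤ) := {z | ‖∑ j, (z j : ℝ) • gsProj b i j.1‖ ≤ B} with hZ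
  -- the extension of a subtype function to `Fin d`
  have hsub : ∀ x : Fin d, x ∈ Finset.Ici i ↔ i ≤ x := fun x => Finset.mem_Ici
  -- key norm computation: for any z : Fin d → ℤ,
  -- ∑_{j ≥ i} z_j • gsProj = ∑_{k ≥ i} czOf • gso  (whenever... always)
  have key : ∀ z : Fin d → ℤ,
      ∑ j ∈ Finset.Ici i, (z j : ℝ) • gsProj b i j
        = ∑ k ∈ Finset.Ici i, czOf (mu b) z k • gso b k := by
    intro z
    rw [sum_gsProj b i (fun j => (z j : ℝ))]
    refine Finset.sum_congr rfl fun k _ => ?_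
    congr 1
    rw [coef, czOf, ← Finset.Ioi_insert k, Finset.sum_insert Finset.notMem_Ioi_self]
    have : mu' b k k = 1 := by simp [mu']
    rw [this, mul_one]
    congr 1
    refine Finset.sum_congr rfl fun j hj => ?_
    rw [mu', if_neg (ne_of_gt (Finset.mem_Ioi.mp hj))]
  -- finiteness of the target set
  have hvli : LinearIndependent ℝ (fun j : S => gsProj b i j.1) := by
    rw [Fintype.linearIndependent_iff]
    intro a ha
    set aext : Fin d → ℝ := fun k => if h : i ≤ k then a ⟨k, h⟩ else 0 with haext
    have hsum : ∑ k ∈ Finset.Ici i, coef b aext k • gso b k = 0 := by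
      rw [← sum_gsProj]
      rw [Finset.sum_subtype (Finset.Ici i) hsub (fun j => aext j • gsProj b i j)]
      rw [← ha]
      refine Finset.sum_congr rfl fun j _ => ?_
      simp [haext, j.2]
    have hcoef0 : ∀ k ∈ Finset.Ici i, coef b aext k = 0 := by
      have hnorm : ∑ k ∈ Finset.Ici i, coef b aext k ^ 2 * ‖gso b k‖ ^ 2 = 0 := by
        rw [← norm_sum_gso_sq, hsum, norm_zero]
        ring
      intro k hk
      have hterm := (Finset.sum_eq_zero_iff_of_nonneg (fun k _ =>
        mul_nonneg (sq_nonneg _) (sq_nonneg _))).mp hnorm k hk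
      have hg : ‖gso b k‖ ≠ 0 := norm_ne_zero_iff.mpr (gso_ne_zero hb k)
      have h2 : coef b aext k ^ 2 = 0 := by
        rcases mul_eq_zero.mp hterm with h | h
        · exact h
        · exact absurd h (pow_ne_zero _ hg)
      exact (pow_eq_zero_iff (by norm_num : (2:ℕ) ≠ 0)).mp h2
    -- downward induction: all aext vanish on Ici i
    have hall : ∀ k, i ≤ k → aext k = 0 := by
      by_contra hcon
      push_neg at hcon
      obtain ⟨k0, hk0i, hk0⟩ := hcon
      set T : Finset (Fin d) := (Finset.Ici i).filter (fun k => aext k ≠ 0) with hT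
      have hTne : T.Nonempty := ⟨k0, Finset.mem_filter.mpr ⟨Finset.mem_Ici.mpr hk0i, hk0⟩⟩
      set m := T.max' hTne with hm
      have hmT := T.max'_mem hTne
      have hmi : i ≤ m := Finset.mem_Ici.mp (Finset.mem_filter.mp hmT).1
      have hma : aext m ≠ 0 := (Finset.mem_filter.mp hmT).2
      have hcm : coef b aext m = aext m := by
        rw [coef, ← Finset.Ioi_insert m, Finset.sum_insert Finset.notMem_Ioi_self]
        have h1 : mu' b m m = 1 := by simp [mu']
        rw [h1, mul_one]
        have h2 : ∑ j ∈ Finset.Ioi m, aext j * mu' b j m = 0 := by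
          refine Finset.sum_eq_zero fun j hj => ?_
          have hjm : m < j := Finset.mem_Ioi.mp hj
          have hji : i ≤ j := le_trans hmi (le_of_lt hjm)
          have : aext j = 0 := by
            by_contra hc
            have hjT : j ∈ T := Finset.mem_filter.mpr ⟨Finset.mem_Ici.mpr hji, hc⟩
            exact absurd (T.le_max' j hjT) (not_le.mpr hjm)
          rw [this, zero_mul]
        rw [h2, add_zero]
      rw [hcoef0 m (Finset.mem_Ici.mpr hmi)] at hcm
      exact hma hcm.symm
    intro j
    have := hall j.1 j.2
    simpa [haext, j.2] using this
  -- the finiteness of Z via coordinate functionals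
  have hZfin : Z.Finite := by
    set v : S → EuclideanSpace ℝ (Fin n) := fun j => gsProj b i j.1 with hv
    set W := Submodule.span ℝ (Set.range v) with hW
    set bas : Module.Basis S ℝ W := Module.Basis.span hvli with hbas
    set L : S → W →L[ℝ] ℝ := fun k => LinearMap.toContinuousLinearMap (bas.coord k) with hL
    set C : S → ℝ := fun k => ‖L k‖ * B with hC
    have hbound : ∀ z ∈ Z, ∀ k : S, |(z k : ℝ)| ≤ C k := by
      intro z hz k
      set w : EuclideanSpace ℝ (Fin n) := ∑ j, (z j : ℝ) • v j with hw
      have hwmem : w ∈ W := by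
        refine Submodule.sum_mem _ fun j _ => Submodule.smul_mem _ _ ?_
        exact Submodule.subset_span ⟨j, rfl⟩
      have hrepr : (⟨w, hwmem⟩ : W) = ∑ j, (z j : ℝ) • bas j := by
        apply Subtype.ext
        push_cast [Submodule.coe_sum]
        refine Finset.sum_congr rfl fun j _ => ?_
        rw [hbas, Module.Basis.span_apply]
      have hcoord : (bas.coord k) ⟨w, hwmem⟩ = (z k : ℝ) := by
        rw [hrepr]
        simp [Module.Basis.coord_apply, map_sum, Module.Basis.repr_self, Finsupp.single_apply]
        rw [Finset.sum_eq_single k (fun x _ hx => if_neg hx) (fun h => absurd (Finset.mem_univ k) h), if_pos rfl]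
      have h1 : |(z k : ℝ)| = ‖L k ⟨w, hwmem⟩‖ := by
        rw [show L k ⟨w, hwmem⟩ = (bas.coord k) ⟨w, hwmem⟩ from rfl, hcoord]
        exact (Real.norm_eq_abs _).symm
      have h2 : ‖L k ⟨w, hwmem⟩‖ ≤ ‖L k‖ * ‖(⟨w, hwmem⟩ : W)‖ := (L k).le_opNorm _
      have h3 : ‖(⟨w, hwmem⟩ : W)‖ = ‖w‖ := rfl
      have h4 : ‖w‖ ≤ B := hz
      rw [h1]
      calc ‖L k ⟨w, hwmem⟩‖ ≤ ‖L k‖ * ‖w‖ := by rw [← h3]; exact h2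
        _ ≤ ‖L k‖ * B := mul_le_mul_of_nonneg_left h4 (norm_nonneg (L k))
    have hss : Z ⊆ Set.pi Set.univ (fun k : S => Set.Icc (-⌈C k⌉) ⌈C k⌉) := by
      intro z hz k _
      have := hbound z hz k
      have habs : |z k| ≤ ⌈C k⌉ := by
        have h5 : ((|z k| : ℤ) : ℝ) ≤ ((⌈C k⌉ : ℤ) : ℝ) := by
          calc ((|z k| : ℤ) : ℝ) = |(z k : ℝ)| := by push_cast; rfl
            _ ≤ C k := this
            _ ≤ ((⌈C k⌉ : ℤ) : ℝ) := Int.le_ceil _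
        exact_mod_cast h5
      rw [Set.mem_Icc]
      exact abs_le.mp habs
    exact Set.Finite.subset (Set.Finite.pi fun k => Set.finite_Icc _ _) hss
  -- the injection
  set yext : (S → ℤ) → Fin d → ℤ := fun y k => if h : i ≤ k then y ⟨k, h⟩ else 1 with hyext
  set F : (S → ℤ) → (S → ℤ) := fun y j => buildZ (mu b) (yext y) j.1 with hF
  refine Set.ncard_le_ncard_of_injOn F ?_ ?_ hZfin
  · -- maps to
    intro y hy
    obtain ⟨hy0, hyb⟩ := hy
    set z : Fin d → ℤ := buildZ (mu b) (yext y) with hz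
    have hyextne : ∀ k, i ≤ k → yext y k ≠ 0 := by
      intro k hk
      simp only [hyext, dif_pos hk]
      exact hy0 _
    show ‖∑ j : S, ((F y j : ℝ)) • gsProj b i j.1‖ ≤ B
    have hsum : ∑ j : S, ((F y j : ℝ)) • gsProj b i j.1
        = ∑ j ∈ Finset.Ici i, (z j : ℝ) • gsProj b i j := by
      rw [Finset.sum_subtype (Finset.Ici i) hsub (fun j => (z j : ℝ) • gsProj b i j)]
    rw [hsum, key z]
    have hnorm2 : ‖∑ k ∈ Finset.Ici i, czOf (mu b) z k • gso b k‖ ^ 2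
        = ∑ k ∈ Finset.Ici i, czOf (mu b) z k ^ 2 * ‖gso b k‖ ^ 2 :=
      norm_sum_gso_sq b _ _
    have hle : ∑ k ∈ Finset.Ici i, czOf (mu b) z k ^ 2 * ‖gso b k‖ ^ 2
        ≤ ∑ k ∈ Finset.Ici i, (yext y k : ℝ) ^ 2 * ‖gso b k‖ ^ 2 := by
      refine Finset.sum_le_sum fun k hk => ?_
      have hk' : i ≤ k := Finset.mem_Ici.mp hk
      have := (cz_mem (mu b) (yext y) k (hyextne k hk')).1
      have hsq : czOf (mu b) z k ^ 2 ≤ (yext y k : ℝ) ^ 2 := by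
        rw [← sq_abs, ← sq_abs ((yext y k : ℝ))]
        exact pow_le_pow_left₀ (abs_nonneg _) this 2
      exact mul_le_mul_of_nonneg_right hsq (sq_nonneg _)
    have hsum2 : ∑ k ∈ Finset.Ici i, (yext y k : ℝ) ^ 2 * ‖gso b k‖ ^ 2
        = ∑ j : S, (y j : ℝ) ^ 2 * ‖gso b j.1‖ ^ 2 := by
      rw [Finset.sum_subtype (Finset.Ici i) hsub
        (fun k => (yext y k : ℝ) ^ 2 * ‖gso b k‖ ^ 2)]
      refine Finset.sum_congr rfl fun j _ => ?_
      simp [hyext, j.2]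
    have hfinal : ‖∑ k ∈ Finset.Ici i, czOf (mu b) z k • gso b k‖ ^ 2 ≤ B ^ 2 := by
      rw [hnorm2]
      calc _ ≤ ∑ k ∈ Finset.Ici i, (yext y k : ℝ) ^ 2 * ‖gso b k‖ ^ 2 := hle
        _ = ∑ j : S, (y j : ℝ) ^ 2 * ‖gso b j.1‖ ^ 2 := hsum2
        _ ≤ 4 / 5 * B ^ 2 := hyb
        _ ≤ B ^ 2 := by nlinarith [sq_nonneg B]
    exact (pow_le_pow_iff_left₀ (norm_nonneg _) hB0 (by norm_num)).mp hfinal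
  · -- injectivity
    intro y hy y' hy' hFeq
    obtain ⟨hy0, _⟩ := hy
    obtain ⟨hy'0, _⟩ := hy'
    funext j
    have hji : i ≤ j.1 := j.2
    set z := buildZ (mu b) (yext y) with hzdef
    set z' := buildZ (mu b) (yext y') with hz'def
    have hzeq : ∀ t : Fin d, i ≤ t → z t = z' t := by
      intro t ht
      have := congrFun hFeq ⟨t, ht⟩
      exact this
    have hceq : czOf (mu b) z j.1 = czOf (mu b) z' j.1 := by
      rw [czOf, czOf, hzeq j.1 hji]
      congr 1
      refine Finset.sum_congr rfl fun t ht => ?_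
      rw [hzeq t (le_trans hji (le_of_lt (Finset.mem_Ioi.mp ht)))]
    have h1 := (cz_mem (mu b) (yext y) j.1 (by simp [hyext, dif_pos hji]; exact hy0 j)).2
    have h2 := (cz_mem (mu b) (yext y') j.1 (by simp [hyext, dif_pos hji]; exact hy'0 j)).2
    have hyj : yext y j.1 = y j := by simp [hyext, dif_pos hji]
    have hy'j : yext y' j.1 = y' j := by simp [hyext, dif_pos hji]
    rw [hyj] at h1
    rw [hy'j] at h2
    rw [← h1, ← h2, ← hzdef, ← hz'def, hceq]
end

section
/- Let (b_1,…,b_d) be linearly independent vectors of ℝ^n and let i ∈ {1,…,d} be such that ‖b_j*‖ ≤ ‖b_1‖/√d for all j ≥ i. Then the number of integer vectors (z_i,…,z_d) ∈ ℤ^{d−i+1} satisfying ‖Σ_{j=i}^{d} z_j b_j(i)‖ ≤ ‖b_1‖ is at least 2^{−(d−i+1)} · ∏_{j=i}^{d} ‖b_1‖/(√d·‖b_j*‖). -/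
open scoped BigOperators

lemma int_icc_mem {t R : ℝ} {a : ℤ} (ha : a ∈ Finset.Icc ⌈-R - t⌉ ⌊R - t⌋) :
    |(a : ℝ) + t| ≤ R := by
  rw [Finset.mem_Icc] at ha
  have h1 : (-R - t : ℝ) ≤ a := le_trans (Int.le_ceil _) (by exact_mod_cast ha.1)
  have h2 : (a : ℝ) ≤ R - t := le_trans (by exact_mod_cast ha.2) (Int.floor_le _)
  rw [abs_le]; constructor <;> linarith

lemma int_icc_card {t R : ℝ} (hR : 1 ≤ R) :
    R ≤ ((Finset.Icc ⌈-R - t⌉ ⌊R - t⌋).card : ℝ) := by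
  rw [Int.card_Icc]
  have h1 : (⌈-R - t⌉ : ℝ) < -R - t + 1 := Int.ceil_lt_add_one _
  have h2 : R - t - 1 < (⌊R - t⌋ : ℝ) := Int.sub_one_lt_floor _
  have h3 : (0:ℤ) ≤ ⌊R - t⌋ + 1 - ⌈-R - t⌉ := by
    have h4 : (0:ℝ) < (⌊R - t⌋ : ℝ) + 1 - (⌈-R - t⌉ : ℝ) := by linarith
    exact_mod_cast le_of_lt (by exact_mod_cast h4)
  have h5 : (((⌊R - t⌋ + 1 - ⌈-R - t⌉).toNat : ℕ) : ℝ) = (⌊R - t⌋:ℝ) + 1 - (⌈-R - t⌉:ℝ) := by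
    rw [← Int.cast_natCast, Int.toNat_of_nonneg h3]; push_cast; ring
  rw [h5]; linarith

/-- Abstract box-counting: lower bound on solutions of triangular box constraints. -/
lemma box_card (m : ℕ) (R : Fin m → ℝ) (hR : ∀ k, 1 ≤ R k)
    (f : Fin m → (Fin m → ℤ) → ℝ)
    (hf : ∀ k z z', (∀ j, k < j → z j = z' j) → f k z = f k z') :
    ∃ F : Finset (Fin m → ℤ),
      (∀ z ∈ F, ∀ k, |(z k : ℝ) + f k z| ≤ R k) ∧ (∏ k, R k) ≤ (F.card : ℝ) := by
  classical
  induction m with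
  | zero =>
    exact ⟨{fun _ => 0}, fun z _ k => k.elim0, by simp⟩
  | succ m ih =>
    obtain ⟨F', h1, h2⟩ := ih (fun k => R k.succ) (fun k => hR k.succ)
      (fun k z => f k.succ (Fin.cons 0 z))
      (by
        intro k z z' h
        refine hf k.succ _ _ ?_
        intro j hj
        rcases Fin.eq_zero_or_eq_succ j with rfl | ⟨j', rfl⟩
        · exact absurd hj (by simp [Fin.lt_def])
        · simp only [Fin.cons_succ]
          exact h j' (Fin.succ_lt_succ_iff.mp hj))
    set g : (Fin m → ℤ) → ℝ := fun t => f 0 (Fin.cons 0 t) with hg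
    set A : (Fin m → ℤ) → Finset ℤ := fun t => Finset.Icc ⌈-R 0 - g t⌉ ⌊R 0 - g t⌋ with hA
    refine ⟨F'.biUnion (fun t => (A t).image (fun a : ℤ => (Fin.cons a t : Fin (m+1) → ℤ))), ?_, ?_⟩
    · intro z hz k
      simp only [Finset.mem_biUnion, Finset.mem_image] at hz
      obtain ⟨t, ht, a, ha, rfl⟩ := hz
      rcases Fin.eq_zero_or_eq_succ k with rfl | ⟨k', rfl⟩
      · have : f 0 (Fin.cons a t) = g t := by
          refine hf 0 _ _ ?_
          intro j hj
          rcases Fin.eq_zero_or_eq_succ j with rfl | ⟨j', rfl⟩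
          · exact absurd hj (lt_irrefl _)
          · simp
        rw [Fin.cons_zero, this]
        exact int_icc_mem ha
      · have : f k'.succ (Fin.cons a t) = f k'.succ (Fin.cons 0 t) := by
          refine hf k'.succ _ _ ?_
          intro j hj
          rcases Fin.eq_zero_or_eq_succ j with rfl | ⟨j', rfl⟩
          · exact absurd hj (by simp [Fin.lt_def])
          · simp
        rw [Fin.cons_succ, this]
        exact h1 t ht k'
    · have hdisj : ∀ t₁ ∈ F', ∀ t₂ ∈ F', t₁ ≠ t₂ →
          Disjoint ((A t₁).image (fun a : ℤ => (Fin.cons a t₁ : Fin (m+1) → ℤ)))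
            ((A t₂).image (fun a : ℤ => (Fin.cons a t₂ : Fin (m+1) → ℤ))) := by
        intro t₁ _ t₂ _ hne
        rw [Finset.disjoint_left]
        rintro z hz1 hz2
        simp only [Finset.mem_image] at hz1 hz2
        obtain ⟨a₁, _, rfl⟩ := hz1
        obtain ⟨a₂, _, h⟩ := hz2
        apply hne
        funext j
        have := congrFun h (j.succ)
        simpa using this.symm
      rw [Finset.card_biUnion hdisj]
      have hcard : ∀ t, ((A t).image (fun a : ℤ => (Fin.cons a t : Fin (m+1) → ℤ))).card = (A t).card := by
        intro t
        apply Finset.card_image_of_injective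
        intro a₁ a₂ h
        have := congrFun h 0
        simpa using this
      calc ∏ k, R k = R 0 * ∏ k : Fin m, R k.succ := by rw [Fin.prod_univ_succ]
        _ ≤ R 0 * F'.card := by
            refine mul_le_mul_of_nonneg_left h2 (le_trans zero_le_one (hR 0))
        _ = ∑ _t ∈ F', R 0 := by rw [Finset.sum_const, nsmul_eq_mul, mul_comm]
        _ ≤ ∑ t ∈ F', ((A t).card : ℝ) := by
            refine Finset.sum_le_sum ?_
            intro t _
            exact int_icc_card (hR 0)
        _ = ((∑ t ∈ F', (A t).card : ℕ) : ℝ) := by push_cast; ring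
        _ = _ := by
            congr 1
            exact (Finset.sum_congr rfl fun t _ => (hcard t).symm)

/-- Abstract box-finiteness. -/
lemma box_finite (m : ℕ) (R : Fin m → ℝ) (f : Fin m → (Fin m → ℤ) → ℝ)
    (hf : ∀ k z z', (∀ j, k < j → z j = z' j) → f k z = f k z') :
    {z : Fin m → ℤ | ∀ k, |(z k : ℝ) + f k z| ≤ R k}.Finite := by
  classical
  induction m with
  | zero =>
    refine (Set.finite_singleton (fun _ => (0:ℤ))).subset ?_
    intro z _
    simp only [Set.mem_singleton_iff]
    funext k; exact k.elim0
  | succ m ih =>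
    have H := ih (fun k => R k.succ) (fun k z => f k.succ (Fin.cons 0 z))
      (by
        intro k z z' h
        refine hf k.succ _ _ ?_
        intro j hj
        rcases Fin.eq_zero_or_eq_succ j with rfl | ⟨j', rfl⟩
        · exact absurd hj (by simp [Fin.lt_def])
        · simp only [Fin.cons_succ]
          exact h j' (Fin.succ_lt_succ_iff.mp hj))
    set g : (Fin m → ℤ) → ℝ := fun t => f 0 (Fin.cons 0 t) with hg
    refine ((H.biUnion (fun t _ =>
      ((Finset.Icc ⌈-R 0 - g t⌉ ⌊R 0 - g t⌋ : Finset ℤ).finite_toSet.image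
        (fun a : ℤ => (Fin.cons a t : Fin (m+1) → ℤ)))))).subset ?_
    intro z hz
    simp only [Set.mem_setOf_eq] at hz
    have htail : Fin.tail z ∈ {z : Fin m → ℤ | ∀ k, |(z k : ℝ) + f k.succ (Fin.cons 0 z)| ≤ R k.succ} := by
      intro k
      have : f k.succ (Fin.cons 0 (Fin.tail z)) = f k.succ z := by
        refine hf k.succ _ _ ?_
        intro j hj
        rcases Fin.eq_zero_or_eq_succ j with rfl | ⟨j', rfl⟩
        · exact absurd hj (by simp [Fin.lt_def])
        · simp [Fin.tail]
      simpa [Fin.tail, this] using hz k.succ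
    refine Set.mem_biUnion htail ?_
    refine ⟨z 0, ?_, by simp [Fin.cons_self_tail]⟩
    have hfz : f 0 z = g (Fin.tail z) := by
      refine hf 0 _ _ ?_
      intro j hj
      rcases Fin.eq_zero_or_eq_succ j with rfl | ⟨j', rfl⟩
      · exact absurd hj (lt_irrefl _)
      · simp [Fin.tail]
    have h0 := hz 0
    rw [hfz] at h0
    rw [abs_le] at h0
    simp only [Finset.coe_Icc, Set.mem_Icc]
    constructor
    · exact Int.ceil_le.2 (by push_cast; linarith [h0.1])
    · exact Int.le_floor.2 (by push_cast; linarith [h0.2])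



section wrappers
variable {n d : ℕ} (b : Fin d → EuclideanSpace ℝ (Fin n))

/-- Gram-Schmidt coefficient. -/
noncomputable def mu (j k : Fin d) : ℝ := inner (𝕜 := ℝ) (gso b k) (b j) / ‖gso b k‖ ^ 2

lemma gso_inner_eq_zero {j k : Fin d} (h : j ≠ k) :
    inner (𝕜 := ℝ) (gso b j) (gso b k) = 0 :=
  @InnerProductSpace.gramSchmidt_orthogonal ℝ _ _ _ _ (Fin d) _ _ (Finite.to_wellFoundedLT) b j k h

lemma gso_ne_zero (hb : LinearIndependent ℝ b) (j : Fin d) : gso b j ≠ 0 :=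
  @InnerProductSpace.gramSchmidt_ne_zero ℝ _ _ _ _ (Fin d) _ _ (Finite.to_wellFoundedLT) b j hb

lemma b_eq_gso_sum (j : Fin d) :
    b j = gso b j + ∑ k ∈ Finset.Iio j, mu b j k • gso b k := by
  have h := @InnerProductSpace.gramSchmidt_def'' ℝ _ _ _ _ (Fin d) _ _ (Finite.to_wellFoundedLT) b j
  simpa [mu, gso] using h

lemma span_eq_gso_span (i : Fin d) :
    Submodule.span ℝ (b '' {k | k < i}) = Submodule.span ℝ (gso b '' {k | k < i}) :=
  (@InnerProductSpace.span_gramSchmidt_Iio ℝ _ _ _ _ (Fin d) _ _ (Finite.to_wellFoundedLT) b i).symm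

lemma gso_mem_orthogonal (i : Fin d) {k : Fin d} (hk : i ≤ k) :
    gso b k ∈ (Submodule.span ℝ (b '' {k | k < i}))ᗮ := by
  rw [span_eq_gso_span, Submodule.mem_orthogonal]
  intro u hu
  induction hu using Submodule.span_induction with
  | mem x hx =>
    obtain ⟨l, hl, rfl⟩ := hx
    exact gso_inner_eq_zero b (ne_of_lt (lt_of_lt_of_le hl hk))
  | zero => exact inner_zero_left _
  | add x y _ _ hx hy => rw [inner_add_left, hx, hy, add_zero]
  | smul c x _ hx => rw [inner_smul_left, hx, mul_zero]

lemma gso_mem_span (i : Fin d) {k : Fin d} (hk : k < i) :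
    gso b k ∈ Submodule.span ℝ (b '' {k | k < i}) := by
  rw [span_eq_gso_span]
  exact Submodule.subset_span ⟨k, hk, rfl⟩

lemma gsProj_eq (i : Fin d) {j : Fin d} (hj : i ≤ j) :
    gsProj b i j = gso b j + ∑ k ∈ Finset.Ico i j, mu b j k • gso b k := by
  set W := Submodule.span ℝ (b '' {k | k < i}) with hW
  have hproj : ∀ v : EuclideanSpace ℝ (Fin n),
      ((Submodule.orthogonalProjectionOnto Wᗮ v : EuclideanSpace ℝ (Fin n))) =
        (Wᗮ.subtypeL.comp (Submodule.orthogonalProjectionOnto Wᗮ)) v := fun _ => rfl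
  have hQ1 : ∀ k, i ≤ k → (Wᗮ.subtypeL.comp (Submodule.orthogonalProjectionOnto Wᗮ)) (gso b k) = gso b k := by
    intro k hk
    exact Submodule.starProjection_eq_self_iff.2 (gso_mem_orthogonal b i hk)
  have hQ0 : ∀ k, k < i → (Wᗮ.subtypeL.comp (Submodule.orthogonalProjectionOnto Wᗮ)) (gso b k) = 0 := by
    intro k hk
    have h0 : Submodule.orthogonalProjectionOnto Wᗮ (gso b k) = 0 :=
      Submodule.orthogonalProjectionOnto_apply_of_mem_orthogonal
        (Submodule.le_orthogonal_orthogonal W (gso_mem_span b i hk))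
    simp [ContinuousLinearMap.comp_apply, h0]
  have hstart : gsProj b i j = (Wᗮ.subtypeL.comp (Submodule.orthogonalProjectionOnto Wᗮ)) (b j) := rfl
  rw [hstart, b_eq_gso_sum b j, map_add, map_sum]
  simp only [map_smul]
  rw [hQ1 j hj]
  congr 1
  have hsub : Finset.Ico i j ⊆ Finset.Iio j := by
    intro k hk
    rw [Finset.mem_Iio]
    exact (Finset.mem_Ico.1 hk).2
  rw [← Finset.sum_subset hsub (by
    intro k hk hnk
    have hki : k < i := by
      rw [Finset.mem_Iio] at hk
      rw [Finset.mem_Ico, not_and] at hnk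
      exact lt_of_not_ge (fun h => hnk h hk)
    rw [hQ0 k hki, smul_zero])]
  refine Finset.sum_congr rfl ?_
  intro k hk
  rw [hQ1 k (Finset.mem_Ico.1 hk).1]

end wrappers

section identities
variable {n d : ℕ} (b : Fin d → EuclideanSpace ℝ (Fin n))

lemma key_sum (i : Fin d) (x : Fin d → ℤ) :
    ∑ j ∈ Finset.Ici i, (x j : ℝ) • gsProj b i j
      = ∑ k ∈ Finset.Ici i,
          ((x k : ℝ) + ∑ j ∈ Finset.Ioi k, mu b j k * (x j : ℝ)) • gso b k := by
  have step1 : ∑ j ∈ Finset.Ici i, (x j : ℝ) • gsProj b i j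
      = ∑ j ∈ Finset.Ici i, ((x j : ℝ) • gso b j
          + ∑ k ∈ Finset.Ico i j, (mu b j k * (x j : ℝ)) • gso b k) := by
    refine Finset.sum_congr rfl ?_
    intro j hj
    rw [gsProj_eq b i (Finset.mem_Ici.1 hj), smul_add, Finset.smul_sum]
    congr 1
    refine Finset.sum_congr rfl ?_
    intro k _
    rw [smul_smul, mul_comm]
  rw [step1, Finset.sum_add_distrib]
  have step2 : ∑ j ∈ Finset.Ici i, ∑ k ∈ Finset.Ico i j, (mu b j k * (x j : ℝ)) • gso b k
      = ∑ k ∈ Finset.Ici i, ∑ j ∈ Finset.Ioi k, (mu b j k * (x j : ℝ)) • gso b k := by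
    refine Finset.sum_comm' ?_
    intro j k
    simp only [Finset.mem_Ici, Finset.mem_Ico, Finset.mem_Ioi, Fin.le_def, Fin.lt_def]
    omega
  rw [step2, ← Finset.sum_add_distrib]
  refine Finset.sum_congr rfl ?_
  intro k _
  rw [add_smul, Finset.sum_smul]

lemma norm_sum_sq (c : Fin d → ℝ) (S : Finset (Fin d)) :
    ‖∑ k ∈ S, c k • gso b k‖ ^ 2 = ∑ k ∈ S, (c k) ^ 2 * ‖gso b k‖ ^ 2 := by
  rw [← real_inner_self_eq_norm_sq]
  rw [inner_sum]
  refine Finset.sum_congr rfl ?_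
  intro k hk
  rw [real_inner_smul_right, sum_inner]
  rw [Finset.sum_eq_single_of_mem k hk (by
    intro l _ hlk
    rw [real_inner_smul_left, gso_inner_eq_zero b hlk, mul_zero])]
  rw [real_inner_smul_left, real_inner_self_eq_norm_sq]
  ring

end identities

/-- shift embedding of `Fin (d - i)` into `Fin d`. -/
def idx {d : ℕ} (i : Fin d) (t : Fin (d - ↑i)) : Fin d :=
  ⟨↑i + ↑t, by have := t.isLt; omega⟩

lemma idx_le {d : ℕ} (i : Fin d) (t : Fin (d - ↑i)) : i ≤ idx i t := by
  simp [idx, Fin.le_def]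

/-- the equivalence between `{j // i ≤ j}` and `Fin (d - i)`. -/
def idxEquiv {d : ℕ} (i : Fin d) : {j : Fin d // i ≤ j} ≃ Fin (d - ↑i) where
  toFun j := ⟨↑j.1 - ↑i, by have := j.1.isLt; have := i.isLt; omega⟩
  invFun t := ⟨idx i t, idx_le i t⟩
  left_inv j := by
    have := Fin.le_def.1 j.2
    ext
    simp only [idx]
    omega
  right_inv t := by
    have := t.isLt
    ext
    simp only [idx]
    omega

lemma idx_idxEquiv {d : ℕ} (i : Fin d) (j : {j : Fin d // i ≤ j}) :
    idx i (idxEquiv i j) = j.1 := by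
  have h := congrArg Subtype.val ((idxEquiv i).symm_apply_apply j)
  exact h

section core
variable {n d : ℕ} (b : Fin d → EuclideanSpace ℝ (Fin n))

/-- The core identity: norm squared of the lattice point as a sum over shifted coordinates. -/
lemma core_identity (i : Fin d) (z : {j : Fin d // i ≤ j} → ℤ)
    (f : Fin (d - ↑i) → (Fin (d - ↑i) → ℤ) → ℝ)
    (hfdef : ∀ k w, f k w = ∑ t ∈ Finset.Ioi k, mu b (idx i t) (idx i k) * (w t : ℝ)) :
    ‖∑ j, (z j : ℝ) • gsProj b i j.1‖ ^ 2
      = ∑ k : Fin (d - ↑i),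
          ((z ((idxEquiv i).symm k) : ℝ) + f k (fun t => z ((idxEquiv i).symm t))) ^ 2
            * ‖gso b (idx i k)‖ ^ 2 := by
  classical
  set x : Fin d → ℤ := fun j => if h : i ≤ j then z ⟨j, h⟩ else 0 with hx
  have hstep1 : ∑ j, (z j : ℝ) • gsProj b i j.1
      = ∑ j ∈ Finset.Ici i, (x j : ℝ) • gsProj b i j := by
    rw [Finset.sum_subtype (Finset.Ici i) (fun j => Finset.mem_Ici) (fun j => (x j : ℝ) • gsProj b i j)]
    refine Finset.sum_congr rfl ?_
    intro j _
    congr 2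
    simp only [hx, dif_pos j.2]
  rw [hstep1, key_sum b i x, norm_sum_sq]
  set C : Fin d → ℝ := fun k => (x k : ℝ) + ∑ j ∈ Finset.Ioi k, mu b j k * (x j : ℝ) with hC
  have hstep2 : ∑ k ∈ Finset.Ici i, C k ^ 2 * ‖gso b k‖ ^ 2
      = ∑ k : {j : Fin d // i ≤ j}, C k.1 ^ 2 * ‖gso b k.1‖ ^ 2 :=
    Finset.sum_subtype (Finset.Ici i) (fun j => Finset.mem_Ici) _
  rw [hstep2]
  rw [Fintype.sum_equiv (idxEquiv i) _
    (fun k => C (idx i k) ^ 2 * ‖gso b (idx i k)‖ ^ 2)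
    (fun j => by simp only [idx_idxEquiv])]
  refine Finset.sum_congr rfl ?_
  intro k _
  have hz1 : (x (idx i k) : ℝ) = (z ((idxEquiv i).symm k) : ℝ) := by
    simp only [hx]
    rw [dif_pos (idx_le i k)]
    rfl
  have hsum : ∑ j ∈ Finset.Ioi (idx i k), mu b j (idx i k) * (x j : ℝ)
      = ∑ t ∈ Finset.Ioi k, mu b (idx i t) (idx i k) * (z ((idxEquiv i).symm t) : ℝ) := by
    refine Finset.sum_bij' (i := fun (j : Fin d) (hj : j ∈ Finset.Ioi (idx i k)) =>
        (⟨↑j - ↑i, by have := j.isLt; have := i.isLt; omega⟩ : Fin (d - ↑i)))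
      (j := fun (t : Fin (d - ↑i)) (_ : t ∈ Finset.Ioi k) => idx i t) ?_ ?_ ?_ ?_ ?_
    · intro j hj
      rw [Finset.mem_Ioi] at hj ⊢
      rw [Fin.lt_def] at hj ⊢
      simp only [idx] at hj ⊢
      have := k.isLt
      omega
    · intro t ht
      rw [Finset.mem_Ioi] at ht ⊢
      rw [Fin.lt_def] at ht ⊢
      simp only [idx]
      omega
    · intro j hj
      rw [Finset.mem_Ioi, Fin.lt_def] at hj
      simp only [idx] at hj
      ext
      simp only [idx]
      omega
    · intro t ht
      have := t.isLt
      ext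
      simp only [idx]
      omega
    · intro j hj
      rw [Finset.mem_Ioi, Fin.lt_def] at hj
      simp only [idx] at hj
      have hj2 : i ≤ j := by rw [Fin.le_def]; omega
      have hidx : idx i (⟨↑j - ↑i, by have := j.isLt; have := i.isLt; omega⟩ : Fin (d - ↑i)) = j := by
        ext; simp only [idx]; omega
      have hsymm : (idxEquiv i).symm (⟨↑j - ↑i, by have := j.isLt; have := i.isLt; omega⟩ : Fin (d - ↑i)) = ⟨j, hj2⟩ :=
        Subtype.ext hidx
      rw [hidx, hsymm]
      simp only [hx]
      rw [dif_pos hj2]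
  simp only [hC]
  rw [hfdef, hz1, hsum]

end core

/-- from Theorem 3 of the paper. If `‖bⱼ*‖ ≤ ‖b₁‖/√d` for all `j ≥ i`,
the number of integer points in the enumeration ellipsoid of Kannan's algorithm is at least
`2^{-(d-i+1)} ∏_{j≥i} ‖b₁‖/(√d ‖bⱼ*‖)`. -/
theorem kannan_enumeration_count_lower_bound
    (n d : ℕ) (b : Fin d → EuclideanSpace ℝ (Fin n)) (hb : LinearIndependent ℝ b)
    (i : Fin d)
    (hsmall : ∀ j : Fin d, i ≤ j → ‖gso b j‖ ≤ ‖b ⟨0, i.pos⟩‖ / Real.sqrt d) :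
    ((1 : ℝ) / 2) ^ (d - (i : ℕ)) *
        ∏ j ∈ Finset.Ici i, ‖b ⟨0, i.pos⟩‖ / (Real.sqrt d * ‖gso b j‖) ≤
      (({z : {j : Fin d // i ≤ j} → ℤ |
          ‖∑ j, (z j : ℝ) • gsProj b i j.1‖ ≤ ‖b ⟨0, i.pos⟩‖}).ncard : ℝ) := by
  
  classical
  set B := ‖b ⟨0, i.pos⟩‖ with hBdef
  set s := Real.sqrt d with hsdef
  have hd : 0 < d := i.pos
  have hs : 0 < s := Real.sqrt_pos.2 (by exact_mod_cast hd)
  have hB : 0 < B := norm_pos_iff.2 (hb.ne_zero ⟨0, i.pos⟩)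
  have hg : ∀ k : Fin d, 0 < ‖gso b k‖ := fun k => norm_pos_iff.2 (gso_ne_zero b hb k)
  set f : Fin (d - ↑i) → (Fin (d - ↑i) → ℤ) → ℝ :=
    fun k w => ∑ t ∈ Finset.Ioi k, mu b (idx i t) (idx i k) * (w t : ℝ) with hfdef
  have hf : ∀ (k : Fin (d - ↑i)) z z', (∀ j, k < j → z j = z' j) → f k z = f k z' := by
    intro k z z' h
    exact Finset.sum_congr rfl (fun t ht => by rw [h t (Finset.mem_Ioi.1 ht)])
  set R : Fin (d - ↑i) → ℝ := fun k => B / (s * ‖gso b (idx i k)‖) with hRdef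
  have hR : ∀ k, 1 ≤ R k := by
    intro k
    rw [hRdef]
    rw [le_div_iff₀ (mul_pos hs (hg _)), one_mul]
    have h1 := (le_div_iff₀ hs).1 (hsmall (idx i k) (idx_le i k))
    linarith [h1]
  set Φ : (Fin (d - ↑i) → ℤ) → ({j : Fin d // i ≤ j} → ℤ) :=
    fun w j => w (idxEquiv i j) with hΦ
  have hΦinj : Function.Injective Φ := by
    intro w w' h
    funext t
    have h2 := congrFun h ((idxEquiv i).symm t)
    simpa only [hΦ, Equiv.apply_symm_apply] using h2
  set T := {z : {j : Fin d // i ≤ j} → ℤ |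
      ‖∑ j, (z j : ℝ) • gsProj b i j.1‖ ≤ B} with hT
  have hcoreΦ : ∀ w : Fin (d - ↑i) → ℤ,
      ‖∑ j, ((Φ w) j : ℝ) • gsProj b i j.1‖ ^ 2
        = ∑ k, ((w k : ℝ) + f k w) ^ 2 * ‖gso b (idx i k)‖ ^ 2 := by
    intro w
    rw [core_identity b i (Φ w) f (fun k w => rfl)]
    refine Finset.sum_congr rfl ?_
    intro k _
    have h1 : (fun t => Φ w ((idxEquiv i).symm t)) = w := by
      funext t
      show w ((idxEquiv i) ((idxEquiv i).symm t)) = w t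
      rw [Equiv.apply_symm_apply]
    have h2 : Φ w ((idxEquiv i).symm k) = w k := by
      show w ((idxEquiv i) ((idxEquiv i).symm k)) = w k
      rw [Equiv.apply_symm_apply]
    rw [h1, h2]
  -- finiteness of T
  set Rbig : Fin (d - ↑i) → ℝ := fun k => B / ‖gso b (idx i k)‖ with hRbigdef
  have hbigfin := box_finite _ Rbig f hf
  have hTsub : T ⊆ Φ '' {w | ∀ k, |(w k : ℝ) + f k w| ≤ Rbig k} := by
    intro z hzT
    have hz : ‖∑ j, (z j : ℝ) • gsProj b i j.1‖ ≤ B := hzT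
    refine ⟨fun t => z ((idxEquiv i).symm t), ?_, ?_⟩
    swap
    · funext j
      show z ((idxEquiv i).symm ((idxEquiv i) j)) = z j
      rw [Equiv.symm_apply_apply]
    intro k
    set w : Fin (d - ↑i) → ℤ := fun t => z ((idxEquiv i).symm t) with hw
    have hΦw : Φ w = z := by
      funext j
      show z ((idxEquiv i).symm ((idxEquiv i) j)) = z j
      rw [Equiv.symm_apply_apply]
    rw [← hΦw] at hz
    have hid := hcoreΦ w
    have hterm : ((w k : ℝ) + f k w) ^ 2 * ‖gso b (idx i k)‖ ^ 2 ≤ B ^ 2 := by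
      calc ((w k : ℝ) + f k w) ^ 2 * ‖gso b (idx i k)‖ ^ 2
          ≤ ∑ k', ((w k' : ℝ) + f k' w) ^ 2 * ‖gso b (idx i k')‖ ^ 2 :=
            Finset.single_le_sum
              (f := fun k' => ((w k' : ℝ) + f k' w) ^ 2 * ‖gso b (idx i k')‖ ^ 2)
              (fun k' _ => by positivity) (Finset.mem_univ k)
        _ = ‖∑ j, ((Φ w) j : ℝ) • gsProj b i j.1‖ ^ 2 := hid.symm
        _ ≤ B ^ 2 := by nlinarith [norm_nonneg (∑ j, ((Φ w) j : ℝ) • gsProj b i j.1)]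
    show |(w k : ℝ) + f k w| ≤ Rbig k
    have hRbigk : Rbig k = B / ‖gso b (idx i k)‖ := rfl
    rw [hRbigk, le_div_iff₀ (hg _)]
    nlinarith [abs_nonneg ((w k : ℝ) + f k w), hg (idx i k), hB,
      sq_abs ((w k : ℝ) + f k w)]
  have hTfin : T.Finite := (hbigfin.image Φ).subset hTsub
  -- the finset of small-box solutions
  obtain ⟨F, hFmem, hFcard⟩ := box_card _ R hR f hf
  have hFsub : ↑(F.image Φ) ⊆ T := by
    intro z hz
    simp only [Finset.coe_image, Set.mem_image, Finset.mem_coe] at hz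
    obtain ⟨w, hwF, rfl⟩ := hz
    show ‖∑ j, ((Φ w) j : ℝ) • gsProj b i j.1‖ ≤ B
    have hid := hcoreΦ w
    have hs2 : s ^ 2 = (d : ℝ) := Real.sq_sqrt (Nat.cast_nonneg d)
    have hsumle : ∑ k, ((w k : ℝ) + f k w) ^ 2 * ‖gso b (idx i k)‖ ^ 2 ≤ B ^ 2 := by
      calc ∑ k, ((w k : ℝ) + f k w) ^ 2 * ‖gso b (idx i k)‖ ^ 2
          ≤ ∑ _k : Fin (d - ↑i), B ^ 2 / d := by
            refine Finset.sum_le_sum ?_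
            intro k _
            have h1 : |(w k : ℝ) + f k w| ≤ R k := hFmem w hwF k
            have h2 : ((w k : ℝ) + f k w) ^ 2 ≤ R k ^ 2 :=
              sq_le_sq' (by linarith [(abs_le.1 h1).1]) ((abs_le.1 h1).2)
            have h3 : R k ^ 2 * ‖gso b (idx i k)‖ ^ 2 = B ^ 2 / d := by
              rw [hRdef]
              have hgne : ‖gso b (idx i k)‖ ≠ 0 := (hg _).ne'
              field_simp
              rw [hs2]
            calc ((w k : ℝ) + f k w) ^ 2 * ‖gso b (idx i k)‖ ^ 2
                ≤ R k ^ 2 * ‖gso b (idx i k)‖ ^ 2 :=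
                  mul_le_mul_of_nonneg_right h2 (by positivity)
              _ = B ^ 2 / d := h3
        _ = ((d - ↑i : ℕ) : ℝ) * (B ^ 2 / d) := by
            rw [Finset.sum_const, Finset.card_univ, Fintype.card_fin, nsmul_eq_mul]
        _ ≤ (d : ℝ) * (B ^ 2 / d) := by
            refine mul_le_mul_of_nonneg_right ?_ (by positivity)
            exact_mod_cast Nat.sub_le d ↑i
        _ = B ^ 2 := by field_simp
    rw [← hid] at hsumle
    nlinarith [norm_nonneg (∑ j, ((Φ w) j : ℝ) • gsProj b i j.1)]
  have hcount : (F.card : ℝ) ≤ (T.ncard : ℝ) := by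
    have h1 : (F.image Φ).card = F.card := Finset.card_image_of_injective F hΦinj
    have h2 : (↑(F.image Φ) : Set _).ncard ≤ T.ncard := Set.ncard_le_ncard hFsub hTfin
    rw [Set.ncard_coe_finset, h1] at h2
    exact_mod_cast h2
  have hprod : ∏ j ∈ Finset.Ici i, B / (s * ‖gso b j‖) = ∏ k, R k := by
    rw [Finset.prod_subtype (Finset.Ici i) (fun j => Finset.mem_Ici)
      (fun j => B / (s * ‖gso b j‖))]
    exact Fintype.prod_equiv (idxEquiv i) _ _
      (fun j => by simp only [hRdef, idx_idxEquiv])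
  calc ((1:ℝ)/2) ^ (d - (i:ℕ)) * ∏ j ∈ Finset.Ici i, B / (s * ‖gso b j‖)
      ≤ ∏ j ∈ Finset.Ici i, B / (s * ‖gso b j‖) := by
        refine mul_le_of_le_one_left ?_ ?_
        · exact Finset.prod_nonneg fun j _ => by positivity
        · exact pow_le_one₀ (by norm_num) (by norm_num)
    _ = ∏ k, R k := hprod
    _ ≤ (F.card : ℝ) := hFcard
    _ ≤ (T.ncard : ℝ) := hcount
end

section
/- Let b ≥ 2 be an integer and consider the function g(x) = −log x + log(x+1)·(1 − (b−1)/x) on ℝ_{>0}. If b ≥ 3, then g is monotonically increasing on [b, ∞); if b = 2, then g is monotonically increasing on [4, ∞). -/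
open Real

private lemma log_shift (a x : ℝ) (ha : 0 < a) (hax : a ≤ x) :
    Real.log (x + 1) ≥ Real.log (a + 1) + (x - a) / (x + 1) := by
  have hx : 0 < x := lt_of_lt_of_le ha hax
  have h1 : (0:ℝ) < a + 1 := by linarith
  have h2 : (0:ℝ) < x + 1 := by linarith
  have ht : (0:ℝ) < (a + 1) / (x + 1) := by positivity
  have hlog : Real.log ((a+1)/(x+1)) ≤ (a+1)/(x+1) - 1 :=
    Real.log_le_sub_one_of_pos ht
  rw [Real.log_div (by linarith) (by linarith)] at hlog
  have : (a+1)/(x+1) - 1 = -((x - a)/(x+1)) := by field_simp; ring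
  rw [this] at hlog
  linarith

private lemma hasDerivAt_g (c x : ℝ) (hx : 0 < x) :
    HasDerivAt (fun x : ℝ => -Real.log x + Real.log (x + 1) * (1 - c / x))
      (-(1/x) + (1/(x+1) * (1 - c/x) + Real.log (x+1) * (c/x^2))) x := by
  have hx1 : (0:ℝ) < x + 1 := by linarith
  have h1 : HasDerivAt Real.log (1/x) x := by
    simpa [one_div] using Real.hasDerivAt_log hx.ne'
  have h2 : HasDerivAt (fun y : ℝ => Real.log (y + 1)) (1/(x+1)) x := by
    have hlog : HasDerivAt Real.log (1/(x+1)) (x+1) := by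
      simpa [one_div] using Real.hasDerivAt_log hx1.ne'
    have hadd : HasDerivAt (fun y : ℝ => y + 1) 1 x := (hasDerivAt_id x).add_const 1
    have hc := hlog.comp x hadd
    rw [mul_one] at hc
    exact hc
  have h3 : HasDerivAt (fun y : ℝ => 1 - c / y) (c/x^2) x := by
    have hinv : HasDerivAt (fun y : ℝ => y⁻¹) (-(x^2)⁻¹) x := hasDerivAt_inv hx.ne'
    have h := (hinv.const_mul c).const_sub 1
    have heq : c * (x^2)⁻¹ = -(c * -(x ^ 2)⁻¹) := by ring
    simp only [div_eq_mul_inv]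
    rw [heq]
    exact h
  exact (h1.neg).add (h2.mul h3)

private lemma aux_mono (c a : ℝ) (ha : 3 ≤ a)
    (hkey : ∀ x : ℝ, a ≤ x → (c + 1) * x ≤ c * (x + 1) * Real.log (x + 1)) :
    MonotoneOn (fun x : ℝ => -Real.log x + Real.log (x + 1) * (1 - c / x))
      (Set.Ici a) := by
  have hpos : ∀ x : ℝ, x ∈ Set.Ici a → 0 < x := fun x hx => by
    have := Set.mem_Ici.mp hx; linarith
  apply monotoneOn_of_deriv_nonneg (convex_Ici a)
  · intro x hx
    exact ((hasDerivAt_g c x (hpos x hx)).continuousAt).continuousWithinAt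
  · intro x hx
    rw [interior_Ici] at hx
    have hx0 : 0 < x := by have := Set.mem_Ioi.mp hx; linarith
    exact ((hasDerivAt_g c x hx0).differentiableAt).differentiableWithinAt
  · intro x hx
    rw [interior_Ici, Set.mem_Ioi] at hx
    have hx0 : 0 < x := by linarith
    have hx1 : (0:ℝ) < x + 1 := by linarith
    rw [(hasDerivAt_g c x hx0).deriv]
    have hk := hkey x hx.le
    have heq : -(1/x) + (1/(x+1) * (1 - c/x) + Real.log (x+1) * (c/x^2))
        = (c * (x+1) * Real.log (x+1) - (c+1) * x) / (x^2 * (x+1)) := by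
      field_simp
      ring
    rw [heq]
    apply div_nonneg (by linarith) (by positivity)

private lemma log_four_lb : (1.3862943606 : ℝ) ≤ Real.log 4 := by
  have h2 : (0.6931471803 : ℝ) < Real.log 2 := Real.log_two_gt_d9
  have h : Real.log 4 = 2 * Real.log 2 := by
    rw [show (4:ℝ) = 2^2 by norm_num, Real.log_pow]
    norm_num
  rw [h]; linarith

private lemma log_five_lb : (8/5 : ℝ) ≤ Real.log 5 := by
  rw [Real.le_log_iff_exp_le (by norm_num : (0:ℝ) < 5)]
  have h8 : Real.exp (8/5) ^ (5:ℕ) = Real.exp 8 := by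
    rw [← Real.exp_nat_mul]; norm_num
  have he : Real.exp 8 ≤ 3125 := by
    have h : Real.exp 8 = (Real.exp 1) ^ (8:ℕ) := by
      rw [← Real.exp_nat_mul]; norm_num
    rw [h]
    have h1 := Real.exp_one_lt_d9
    calc (Real.exp 1) ^ (8:ℕ) ≤ (2.7182818286:ℝ) ^ (8:ℕ) :=
          pow_le_pow_left₀ (Real.exp_pos 1).le h1.le 8
      _ ≤ 3125 := by norm_num
  have hp : Real.exp (8/5) ^ (5:ℕ) ≤ (5:ℝ) ^ (5:ℕ) := by
    rw [h8]; norm_num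
    linarith
  exact le_of_pow_le_pow_left₀ (by norm_num) (by norm_num) hp

private lemma key1 (b : ℕ) (hb : 3 ≤ b) (x : ℝ) (hx : (b:ℝ) ≤ x) :
    (((b:ℝ) - 1) + 1) * x ≤ ((b:ℝ) - 1) * (x + 1) * Real.log (x + 1) := by
  have hb3 : (3:ℝ) ≤ (b:ℝ) := by exact_mod_cast hb
  have hx3 : (3:ℝ) ≤ x := le_trans hb3 hx
  have hx1 : (0:ℝ) < x + 1 := by linarith
  set L := Real.log (x+1) with hL
  set M := Real.log ((b:ℝ)+1) with hM'
  have hM : (1.3862943606 : ℝ) ≤ M := by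
    have h4 : Real.log 4 ≤ M := Real.log_le_log (by norm_num) (by linarith)
    linarith [log_four_lb]
  have hshift := log_shift (b:ℝ) x (by linarith) hx
  have hdiv : (x+1) * ((x - (b:ℝ))/(x+1)) = x - (b:ℝ) := by field_simp
  have hshift' : (x+1) * L ≥ (x+1) * M + (x - (b:ℝ)) := by
    have h := mul_le_mul_of_nonneg_left hshift hx1.le
    rw [mul_add, hdiv] at h
    linarith
  have h1 : ((b:ℝ)-1) * ((x+1)*L) ≥ ((b:ℝ)-1) * ((x+1)*M + (x-(b:ℝ))) :=
    mul_le_mul_of_nonneg_left hshift' (by linarith)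
  have h2 : (x+1) * M ≥ (x+1) * 1.3862943606 :=
    mul_le_mul_of_nonneg_left hM hx1.le
  nlinarith [mul_nonneg (sub_nonneg.2 hx) (show (0:ℝ) ≤ 1.3862943606*(b:ℝ) - 2.3862943606 by linarith),
    mul_nonneg (sub_nonneg.2 hb3) (sub_nonneg.2 hb3),
    mul_le_mul_of_nonneg_left h2 (show (0:ℝ) ≤ (b:ℝ)-1 by linarith)]

private lemma key2 (x : ℝ) (hx : (4:ℝ) ≤ x) :
    ((1:ℝ) + 1) * x ≤ 1 * (x + 1) * Real.log (x + 1) := by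
  have hx1 : (0:ℝ) < x + 1 := by linarith
  have hshift := log_shift 4 x (by norm_num) hx
  have hdiv : (x+1) * ((x - 4)/(x+1)) = x - 4 := by field_simp
  have hshift' : (x+1) * Real.log (x+1) ≥ (x+1) * Real.log 5 + (x - 4) := by
    have h := mul_le_mul_of_nonneg_left hshift hx1.le
    rw [mul_add, hdiv] at h
    have : (4:ℝ) + 1 = 5 := by norm_num
    rw [this] at h
    linarith
  have h2 : (x+1) * Real.log 5 ≥ (x+1) * (8/5) :=
    mul_le_mul_of_nonneg_left log_five_lb hx1.le
  nlinarith

/-- Lemma 7 of the paper. The function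
`g(x) = -log x + log(x+1)(1-(b-1)/x)` is monotonically increasing on `[b,∞)` when `b ≥ 3`,
and on `[4,∞)` when `b = 2`. -/
theorem monotone_aux_function (b : ℕ) (hb : 2 ≤ b) :
    (3 ≤ b →
      MonotoneOn (fun x : ℝ => -Real.log x + Real.log (x + 1) * (1 - ((b : ℝ) - 1) / x))
        (Set.Ici (b : ℝ))) ∧
    (b = 2 →
      MonotoneOn (fun x : ℝ => -Real.log x + Real.log (x + 1) * (1 - ((b : ℝ) - 1) / x))
        (Set.Ici (4 : ℝ))) := by
  constructor
  · intro h3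
    have hb3 : (3:ℝ) ≤ (b:ℝ) := by exact_mod_cast h3
    exact aux_mono ((b:ℝ)-1) (b:ℝ) hb3 (fun x hx => by
      have := key1 b h3 x hx
      linarith)
  · intro h2
    subst h2
    apply aux_mono (((2:ℕ):ℝ)-1) 4 (by norm_num)
    intro x hx
    have h := key2 x hx
    push_cast
    linarith
end

section
/- Let a ≥ 8 and b with 2 ≤ b < a be integers. Then Σ_{x=b}^{a−1} (log a − log x + log(x+1)·(1 − (b−1)/x)) ≤ (a−b)·log(a−b+1) + (a−b)·(log(a²/((a−1)(a−b+1))) − ((b−1)/(a−1))·log a). -/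
open scoped BigOperators

private def Stmt (a b : ℕ) : Prop :=
  ∑ x ∈ Finset.Ico b a,
      (Real.log a - Real.log x + Real.log ((x : ℝ) + 1) * (1 - ((b : ℝ) - 1) / (x : ℝ))) ≤
    ((a : ℝ) - (b : ℝ)) * Real.log ((a : ℝ) - (b : ℝ) + 1) +
      ((a : ℝ) - (b : ℝ)) *
        (Real.log ((a : ℝ) ^ 2 / (((a : ℝ) - 1) * ((a : ℝ) - (b : ℝ) + 1))) -
          ((b : ℝ) - 1) / ((a : ℝ) - 1) * Real.log a)

private lemma base1 (b : ℕ) (hb : 2 ≤ b) : Stmt (b + 1) b := by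
  unfold Stmt
  rw [Finset.sum_Ico_succ_top (le_refl b), Finset.Ico_self, Finset.sum_empty]
  push_cast
  have hB : (2:ℝ) ≤ (b:ℝ) := by exact_mod_cast hb
  have h1 : ((b:ℝ) + 1 - (b:ℝ) + 1) = 2 := by ring
  rw [h1]
  have h2 : (((b:ℝ) + 1) ^ 2 / (((b:ℝ) + 1 - 1) * 2)) = ((b:ℝ)+1)^2 / ((b:ℝ) * 2) := by
    ring_nf
  rw [h2]
  have h3 : Real.log (((b:ℝ)+1)^2 / ((b:ℝ) * 2)) =
      2 * Real.log ((b:ℝ)+1) - Real.log (b:ℝ) - Real.log 2 := by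
    rw [Real.log_div (by positivity) (by positivity), Real.log_mul (by positivity) (by norm_num),
      Real.log_pow]
    push_cast; ring
  rw [h3]
  apply le_of_eq
  have hb0 : (b:ℝ) ≠ 0 := by positivity
  field_simp
  ring_nf
  field_simp
  ring

private lemma base2 : Stmt 8 2 := by
  unfold Stmt
  rw [show (8:ℕ) = 2+1+1+1+1+1+1 by norm_num]
  rw [Finset.sum_Ico_succ_top (by norm_num), Finset.sum_Ico_succ_top (by norm_num),
    Finset.sum_Ico_succ_top (by norm_num), Finset.sum_Ico_succ_top (by norm_num),
    Finset.sum_Ico_succ_top (by norm_num), Finset.sum_Ico_succ_top (by norm_num),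
    Finset.Ico_self, Finset.sum_empty]
  norm_num
  have l2 : (0:ℝ) < Real.log 2 := Real.log_pos (by norm_num)
  have h4 : Real.log 4 = 2 * Real.log 2 := by
    rw [show (4:ℝ) = 2^2 by norm_num, Real.log_pow]; push_cast; ring
  have h6 : Real.log 6 = Real.log 2 + Real.log 3 := by
    rw [show (6:ℝ) = 2*3 by norm_num, Real.log_mul (by norm_num) (by norm_num)]
  have h8 : Real.log 8 = 3 * Real.log 2 := by
    rw [show (8:ℝ) = 2^3 by norm_num, Real.log_pow]; push_cast; ring
  have h64 : Real.log (64/49) = 6 * Real.log 2 - 2 * Real.log 7 := by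
    rw [show (64/49:ℝ) = 2^6/7^2 by norm_num,
      Real.log_div (by norm_num) (by norm_num), Real.log_pow, Real.log_pow]
    push_cast; ring
  have b3 : 79/50 * Real.log 2 ≤ Real.log 3 := by
    have h : Real.log ((2:ℝ)^79) ≤ Real.log ((3:ℝ)^50) :=
      Real.log_le_log (by norm_num) (by norm_num)
    rw [Real.log_pow, Real.log_pow] at h
    push_cast at h; linarith
  have b5 : 58/25 * Real.log 2 ≤ Real.log 5 := by
    have h : Real.log ((2:ℝ)^58) ≤ Real.log ((5:ℝ)^25) :=
      Real.log_le_log (by norm_num) (by norm_num)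
    rw [Real.log_pow, Real.log_pow] at h
    push_cast at h; linarith
  have b7 : Real.log 7 ≤ 281/100 * Real.log 2 := by
    have h : Real.log ((7:ℝ)^100) ≤ Real.log ((2:ℝ)^281) :=
      Real.log_le_log (by norm_num) (by exact_mod_cast (by decide : (7:ℕ)^100 ≤ 2^281))
    rw [Real.log_pow, Real.log_pow] at h
    push_cast at h; linarith
  linarith

set_option maxHeartbeats 1000000 in
private lemma step (a b : ℕ) (hb : 2 ≤ b) (hba : b < a)
    (hkey : (1:ℝ) ≤ ((b:ℝ) - 1) * (Real.log ((a:ℝ) + 1) - 1))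
    (IH : Stmt a b) : Stmt (a + 1) b := by
  unfold Stmt at IH ⊢
  push_cast
  have hB2 : (2:ℝ) ≤ (b:ℝ) := by exact_mod_cast hb
  have hAB : (b:ℝ) + 1 ≤ (a:ℝ) := by exact_mod_cast hba
  set A := (a:ℝ) with hAdef
  set B := (b:ℝ) with hBdef
  have hA3 : (3:ℝ) ≤ A := by linarith
  have hA0 : (0:ℝ) < A := by linarith
  have hA1 : (0:ℝ) < A - 1 := by linarith
  have hAB1 : (0:ℝ) < A - B + 1 := by linarith
  have hAB2 : (0:ℝ) < A - B + 2 := by linarith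
  rw [Finset.sum_Ico_succ_top hba.le]
  have hsplit : ∀ x ∈ Finset.Ico b a,
      (Real.log (A + 1) - Real.log (x:ℝ) + Real.log ((x:ℝ) + 1) * (1 - (B - 1) / (x:ℝ)))
      = (Real.log A - Real.log (x:ℝ) + Real.log ((x:ℝ) + 1) * (1 - (B - 1) / (x:ℝ)))
        + (Real.log (A + 1) - Real.log A) := by
    intro x _; ring
  rw [Finset.sum_congr rfl hsplit, Finset.sum_add_distrib, Finset.sum_const, Nat.card_Ico,
    nsmul_eq_mul, Nat.cast_sub hba.le]
  rw [show A + 1 - 1 = A by ring, show A + 1 - B + 1 = A - B + 2 by ring]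
  set l1 := Real.log (A - 1) with hl1
  set l2 := Real.log A with hl2
  set l3 := Real.log (A + 1) with hl3
  have hR1 : Real.log (A ^ 2 / ((A - 1) * (A - B + 1)))
      = 2 * l2 - l1 - Real.log (A - B + 1) := by
    rw [Real.log_div (by positivity) (by positivity),
      Real.log_mul (by positivity) (by positivity), Real.log_pow]
    push_cast; ring
  have hR2 : Real.log ((A + 1) ^ 2 / (A * (A - B + 2)))
      = 2 * l3 - l2 - Real.log (A - B + 2) := by
    rw [Real.log_div (by positivity) (by positivity),
      Real.log_mul (by positivity) (by positivity), Real.log_pow]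
    push_cast; ring
  have h1 : l3 - l2 ≤ 1 / A := by
    have h := Real.log_le_sub_one_of_pos (show (0:ℝ) < (A + 1) / A by positivity)
    rw [Real.log_div (by positivity) (by positivity)] at h
    have e : (A + 1) / A - 1 = 1 / A := by field_simp; ring
    rw [e] at h; exact h
  have h2 : 2 * l2 - l1 - l3 ≤ 1 / ((A - 1) * (A + 1)) := by
    have h := Real.log_le_sub_one_of_pos
      (show (0:ℝ) < A ^ 2 / ((A - 1) * (A + 1)) by positivity)
    rw [Real.log_div (by positivity) (by positivity),
      Real.log_mul (by positivity) (by positivity), Real.log_pow] at h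
    have e : A ^ 2 / ((A - 1) * (A + 1)) - 1 = 1 / ((A - 1) * (A + 1)) := by
      field_simp; ring
    rw [e] at h; push_cast at h; linarith
  have hQ : 0 ≤ (A - 1) * (A - B + 1) * l3 - A * (2 * A - B - 1) * l2 + A * (A - 1) * l1 := by
    have p1 : A * (A - 1) * (2 * l2 - l1 - l3) ≤ A * (A - 1) * (1 / ((A - 1) * (A + 1))) :=
      mul_le_mul_of_nonneg_left h2 (by positivity)
    have e1 : A * (A - 1) * (1 / ((A - 1) * (A + 1))) = A / (A + 1) := by field_simp
    have e1' : A / (A + 1) ≤ 1 := by rw [div_le_one (by linarith)]; linarith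
    have p2 : (B - 1) * A * (l3 - l2) ≤ (B - 1) * A * (1 / A) :=
      mul_le_mul_of_nonneg_left h1 (by nlinarith)
    have e2 : (B - 1) * A * (1 / A) = B - 1 := by field_simp
    rw [e1] at p1
    rw [e2] at p2
    nlinarith [p1, p2, hkey, e1']
  have hP : 0 ≤ (A - B) * ((A - B + 1) / A * l3 - (2 * A - B - 1) / (A - 1) * l2 + l1) := by
    have hAB0 : (0:ℝ) ≤ A - B := by linarith
    have := mul_nonneg hAB0 hQ
    have e : (A - B) * ((A - B + 1) / A * l3 - (2 * A - B - 1) / (A - 1) * l2 + l1)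
        = (A - B) * ((A - 1) * (A - B + 1) * l3 - A * (2 * A - B - 1) * l2 + A * (A - 1) * l1)
          / (A * (A - 1)) := by
      rw [eq_div_iff (ne_of_gt (show (0:ℝ) < A * (A - 1) by positivity))]
      field_simp
      try ring
      try ring_nf
      try exact Or.inl trivial
    rw [e]
    positivity
  have hEq : ((A + 1 - B) * Real.log (A + 1 - B + 1) +
        (A + 1 - B) * (Real.log ((A + 1) ^ 2 / (A * (A - B + 2))) - (B - 1) / A * l3))
      - (((A - B) * Real.log (A - B + 1) +
          (A - B) * (Real.log (A ^ 2 / ((A - 1) * (A - B + 1))) - (B - 1) / (A - 1) * l2))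
        + (A - B) * (l3 - l2) + (l3 - l2 + l3 * (1 - (B - 1) / A)))
      = (A - B) * ((A - B + 1) / A * l3 - (2 * A - B - 1) / (A - 1) * l2 + l1) := by
    rw [hR1, hR2, show A + 1 - B + 1 = A - B + 2 by ring]
    field_simp
    ring
  rw [show A + 1 - B + 1 = A - B + 2 by ring] at hEq
  linarith [IH, hEq, hP]

private lemma exp_two_le : Real.exp 2 ≤ 9 := by
  have h1 := Real.exp_one_lt_d9
  have h2 := Real.exp_pos 1
  have h3 : Real.exp 2 = Real.exp 1 * Real.exp 1 := by
    rw [← Real.exp_add]; norm_num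
  nlinarith

private lemma exp_3half_le : Real.exp (3/2) ≤ 5 := by
  have h1 := Real.exp_one_lt_d9
  have h2 := Real.exp_pos 1
  have h3 : Real.exp 3 = Real.exp 1 * Real.exp 1 * Real.exp 1 := by
    rw [← Real.exp_add, ← Real.exp_add]; norm_num
  have hsq : Real.exp (3/2) * Real.exp (3/2) = Real.exp 3 := by
    rw [← Real.exp_add]; norm_num
  nlinarith [Real.exp_pos (3/2)]

private lemma main2 : ∀ a : ℕ, 8 ≤ a → Stmt a 2 := by
  intro a ha
  induction a, ha using Nat.le_induction with
  | base => exact base2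
  | succ n hn IH =>
    refine step n 2 (by norm_num) (by omega) ?_ IH
    have hn9 : (9:ℝ) ≤ (n:ℝ) + 1 := by
      have : (8:ℝ) ≤ (n:ℝ) := by exact_mod_cast hn
      linarith
    have hlog : (2:ℝ) ≤ Real.log ((n:ℝ) + 1) := by
      rw [Real.le_log_iff_exp_le (by positivity)]
      linarith [exp_two_le]
    push_cast
    linarith

private lemma main3 (b : ℕ) (hb : 3 ≤ b) : ∀ a : ℕ, b + 1 ≤ a → Stmt a b := by
  intro a ha
  induction a, ha using Nat.le_induction with
  | base => exact base1 b (by omega)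
  | succ n hn IH =>
    refine step n b (by omega) (by omega) ?_ IH
    have hB3 : (3:ℝ) ≤ (b:ℝ) := by exact_mod_cast hb
    have hn5 : (5:ℝ) ≤ (n:ℝ) + 1 := by
      have : (4:ℝ) ≤ (n:ℝ) := by
        have : 4 ≤ n := by omega
        exact_mod_cast this
      linarith
    have hlog : (3/2:ℝ) ≤ Real.log ((n:ℝ) + 1) := by
      rw [Real.le_log_iff_exp_le (by positivity)]
      linarith [exp_3half_le]
    nlinarith

/-- Lemma 8 of the paper. For integers `a ≥ 8` and `2 ≤ b < a`,
`∑_{x=b}^{a-1} (log a - log x + log(x+1)(1-(b-1)/x))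
  ≤ (a-b) log(a-b+1) + (a-b)(log(a²/((a-1)(a-b+1))) - ((b-1)/(a-1)) log a)`. -/
theorem sum_compensation_bound (a b : ℕ) (ha : 8 ≤ a) (hb : 2 ≤ b) (hba : b < a) :
    ∑ x ∈ Finset.Ico b a,
        (Real.log a - Real.log x + Real.log ((x : ℝ) + 1) * (1 - ((b : ℝ) - 1) / (x : ℝ))) ≤
      ((a : ℝ) - (b : ℝ)) * Real.log ((a : ℝ) - (b : ℝ) + 1) +
        ((a : ℝ) - (b : ℝ)) *
          (Real.log ((a : ℝ) ^ 2 / (((a : ℝ) - 1) * ((a : ℝ) - (b : ℝ) + 1))) -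
            ((b : ℝ) - 1) / ((a : ℝ) - 1) * Real.log a) := by
  rcases eq_or_lt_of_le hb with h2 | h3
  · exact h2 ▸ main2 a ha
  · exact main3 b h3 a (by omega)
end
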